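/- arXiv:2603.04060 — 5 statements merged into one kernel-verified Lean document; each statement's English description precedes it below -/
import Mathlib

section
/- Let R be a commutative ring. Then fPD(R) ≤ FP-id_R(R), i.e., the small finitistic dimension of R is at most the self-FP-injective dimension of R. -/
universe u

open CategoryTheory Opposite

/-- `extMod R A B i` is the Ext module `Ext_R^i(A, B)` of the `R`-modules `A` and `B`. -/
noncomputable abbrev extMod (R : Type u) [CommRing R] (A B : Type u)
    [AddCommGroup A] [Module R A] [AddCommGroup B] [Module R B] (i : ℕ) : ModuleCat R :=
  ((Ext R (ModuleCat.{u} R) i).obj (op (ModuleCat.of R A))).obj (ModuleCat.of R B)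

/-- `HasFGProjRes R d M` : there is an exact sequence `0 → P_d → ⋯ → P_0 → M → 0`
with each `P_i` finitely generated projective (a finite projective resolution of length `d`). -/
def HasFGProjRes (R : Type u) [CommRing R] :
    ℕ → (M : Type u) → [AddCommGroup M] → [Module R M] → Prop
  | 0, M, _, _ => Module.Finite R M ∧ Module.Projective R M
  | d + 1, M, _, _ => ∃ (P : Type u) (_ : AddCommGroup P) (_ : Module R P) (f : P →ₗ[R] M),
      Module.Finite R P ∧ Module.Projective R P ∧ Function.Surjective f ∧
      HasFGProjRes R d (LinearMap.ker f)

/-- The small finitistic dimension of `R` is at most `d`: every module admitting a finite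
projective resolution (by finitely generated projectives) has projective dimension `≤ d`,
i.e. admits such a resolution of length `≤ d`. -/
def fPDle (R : Type u) [CommRing R] (d : ℕ) : Prop :=
  ∀ (M : Type u) [AddCommGroup M] [Module R M],
    (∃ m : ℕ, HasFGProjRes R m M) → ∃ k ≤ d, HasFGProjRes R k M

/-- The self-FP-injective dimension of `R` is at most `d`: for some `m ≤ d`,
`Ext_R^{m+1}(N, R) = 0` for every finitely presented `R`-module `N`. -/
def FPInjDimLE (R : Type u) [CommRing R] (d : ℕ) : Prop :=
  ∃ m ≤ d, ∀ (N : Type u) [AddCommGroup N] [Module R N],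
    Module.FinitePresentation R N → Subsingleton (extMod R N R (m + 1))

namespace FPDAux

open CategoryTheory Limits HomologicalComplex

variable {R : Type u} [CommRing R]

lemma subsingleton_of_isZero {A : ModuleCat.{u} R} (h : IsZero A) : Subsingleton A := by
  have hid : (𝟙 A) = 0 := h.eq_of_src _ _
  refine ⟨fun x y => ?_⟩
  have hx : ∀ z : A, z = 0 := fun z => by
    calc z = (𝟙 A) z := rfl
    _ = (0 : A ⟶ A) z := by rw [hid]
    _ = 0 := rfl
  rw [hx x, hx y]

lemma subsingleton_iff_isZero (A : ModuleCat.{u} R) : Subsingleton A ↔ IsZero A :=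
  ⟨fun h => @ModuleCat.isZero_of_subsingleton _ _ A h, subsingleton_of_isZero⟩

/-- Exactness of the complex `Hom(C_•, Y)` at spot `j+1`, stated concretely. -/
def YExactAt (Cx : ChainComplex (ModuleCat.{u} R) ℕ) (j : ℕ) (Y : ModuleCat.{u} R) : Prop :=
  ∀ e : Cx.X (j+1) ⟶ Y, Cx.d (j+2) (j+1) ≫ e = 0 →
    ∃ φ : Cx.X j ⟶ Y, Cx.d (j+1) j ≫ φ = e

/-- The main bridge: for any projective resolution `PR` of `W`,
`Ext^{j+1}(W, Y)` is subsingleton iff the concrete exactness condition holds. -/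
lemma subsingleton_congr_iso {A B : ModuleCat.{u} R} (e : A ≅ B) :
    Subsingleton A ↔ Subsingleton B := by
  constructor
  · intro hA
    exact ⟨fun x y => by
      rw [← CategoryTheory.Iso.inv_hom_id_apply e x, ← CategoryTheory.Iso.inv_hom_id_apply e y]
      exact congrArg _ (Subsingleton.elim _ _)⟩
  · intro hB
    exact ⟨fun x y => by
      rw [← CategoryTheory.Iso.hom_inv_id_apply e x, ← CategoryTheory.Iso.hom_inv_id_apply e y]
      exact congrArg _ (Subsingleton.elim _ _)⟩

lemma subsingleton_ext_iff {W : ModuleCat.{u} R} (PR : ProjectiveResolution W)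
    (j : ℕ) (Y : ModuleCat.{u} R) :
    Subsingleton (((Ext R (ModuleCat.{u} R) (j+1)).obj (op W)).obj Y) ↔
      YExactAt PR.complex j Y := by
  have e1 := PR.isoExt (R := R) (j+1) Y
  rw [subsingleton_congr_iso e1]
  rw [subsingleton_iff_isZero, ← HomologicalComplex.exactAt_iff_isZero_homology,
    HomologicalComplex.exactAt_iff' _ j (j+1) (j+2) (by simp) (by simp),
    ShortComplex.moduleCat_exact_iff]
  exact Iff.rfl

section Extend

variable {P M : Type u} [AddCommGroup P] [Module R P] [AddCommGroup M] [Module R M]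
variable [Module.Projective R P] (g : P →ₗ[R] M)
variable (Q : ProjectiveResolution (ModuleCat.of R (LinearMap.ker g)))

/-- Degree-0 map of the resolution of the kernel, with identified target. -/
noncomputable def pr0 : Q.complex.X 0 ⟶ ModuleCat.of R (LinearMap.ker g) :=
  Q.π.f 0 ≫ (HomologicalComplex.singleObjXSelf (ComplexShape.down ℕ) 0
    (ModuleCat.of R (LinearMap.ker g))).hom

lemma d_comp_pr0 : Q.complex.d 1 0 ≫ pr0 g Q = 0 := by
  rw [pr0, ← Category.assoc, ProjectiveResolution.complex_d_comp_π_f_zero, zero_comp]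

lemma epi_pr0 : Epi (pr0 g Q) := by
  have h0 : QuasiIsoAt Q.π 0 := inferInstance
  rw [ChainComplex.quasiIsoAt₀_iff, ShortComplex.quasiIso_iff_of_zeros'
    _ (Q.complex.shape 0 0 (by simp)) rfl rfl] at h0
  haveI : Epi (Q.π.f 0) := h0.2
  exact epi_comp _ _

lemma pr0_surjective : Function.Surjective (pr0 g Q) :=
  (ModuleCat.epi_iff_surjective _).1 (epi_pr0 g Q)

/-- The extension of the resolution `Q` of `ker g` to a resolution of `M`. -/
noncomputable def EC : ChainComplex (ModuleCat.{u} R) ℕ :=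
  ChainComplex.of
    (fun n => match n with
      | 0 => ModuleCat.of R P
      | (n+1) => Q.complex.X n)
    (fun n => match n with
      | 0 => pr0 g Q ≫ ModuleCat.ofHom (LinearMap.ker g).subtype
      | (n+1) => Q.complex.d (n+1) n)
    (by
      rintro (_ | n)
      · rw [← Category.assoc, d_comp_pr0, zero_comp]
      · exact Q.complex.d_comp_d _ _ _)

lemma EC_d_one_zero :
    (EC g Q).d 1 0 = pr0 g Q ≫ ModuleCat.ofHom (LinearMap.ker g).subtype :=
  by unfold EC; dsimp only [ChainComplex.of]; exact ChainComplex.of_d _ _ 0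

lemma EC_d_succ (n : ℕ) : (EC g Q).d (n+2) (n+1) = Q.complex.d (n+1) n :=
  by unfold EC; dsimp only [ChainComplex.of]; exact ChainComplex.of_d _ _ (n+1)

/-- The augmentation of the extended resolution. -/
noncomputable def ECπ :
    EC g Q ⟶ (ChainComplex.single₀ (ModuleCat.{u} R)).obj (ModuleCat.of R M) :=
  (ChainComplex.toSingle₀Equiv _ _).symm ⟨ModuleCat.ofHom g, by
    rw [EC_d_one_zero]; refine (Category.assoc (pr0 g Q) _ _).trans ?_
    have h1 : ModuleCat.ofHom (LinearMap.ker g).subtype ≫ ModuleCat.ofHom g = 0 := by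
      ext k
      have h2 : (ModuleCat.ofHom (LinearMap.ker g).subtype ≫ ModuleCat.ofHom g) k = g k.1 := rfl
      rw [h2, k.2]
      rfl
    exact (congrArg (fun t => pr0 g Q ≫ t) h1).trans Limits.comp_zero⟩

lemma ECπ_f_zero : (ECπ g Q).f 0 = ModuleCat.ofHom g := by
  unfold ECπ
  exact ChainComplex.toSingle₀Equiv_symm_apply_f_zero _ _

lemma EC_exactAt_succ (n : ℕ) : (EC g Q).ExactAt (n+1) := by
  rw [HomologicalComplex.exactAt_iff' _ (n+2) (n+1) n (by simp) (by simp),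
    ShortComplex.moduleCat_exact_iff]
  match n with
  | 0 =>
    intro x hx
    replace hx : (pr0 g Q ≫ ModuleCat.ofHom (LinearMap.ker g).subtype) x = 0 := by
      rw [← EC_d_one_zero]; exact hx
    have hx' : pr0 g Q x = 0 := Subtype.ext hx
    have hπx : Q.π.f 0 x = 0 := by
      have h2 := congrArg (HomologicalComplex.singleObjXSelf (ComplexShape.down ℕ) 0
        (ModuleCat.of R (LinearMap.ker g))).inv hx'
      exact hx'
    have hQ := Q.exact₀
    rw [ShortComplex.moduleCat_exact_iff] at hQ
    obtain ⟨y, hy⟩ := hQ x hπx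
    refine ⟨y, ?_⟩
    have : (EC g Q).d 2 1 y = x := by rw [EC_d_succ]; exact hy
    exact this
  | (n+1) =>
    intro x hx
    have hQ := Q.complex_exactAt_succ n
    rw [HomologicalComplex.exactAt_iff' _ (n+2) (n+1) n (by simp) (by simp),
      ShortComplex.moduleCat_exact_iff] at hQ
    replace hx : Q.complex.d (n+1) n x = 0 := by
      rw [← EC_d_succ]; exact hx
    obtain ⟨y, hy⟩ := hQ x hx
    refine ⟨y, ?_⟩
    have : (EC g Q).d (n+3) (n+2) y = x := by rw [EC_d_succ]; exact hy
    exact this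

/-- The extended resolution as a `ProjectiveResolution` of `M`. -/
noncomputable def EPR (hg : Function.Surjective g) :
    ProjectiveResolution (ModuleCat.of R M) where
  complex := EC g Q
  projective := by
    rintro (_ | n)
    · exact (IsProjective.iff_projective _).1 ‹Module.Projective R P›
    · exact Q.projective n
  hasHomology := inferInstance
  π := ECπ g Q
  quasiIso := ⟨fun n => by
    match n with
    | 0 =>
      rw [ChainComplex.quasiIsoAt₀_iff, ShortComplex.quasiIso_iff_of_zeros'
        _ ((EC g Q).shape 0 0 (by simp)) rfl rfl]
      constructor
      · rw [ShortComplex.moduleCat_exact_iff]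
        intro x hx
        replace hx : (ModuleCat.ofHom g) x = 0 := by
          rw [← ECπ_f_zero]; exact hx
        obtain ⟨y, hy⟩ := pr0_surjective g Q ⟨x, hx⟩
        refine ⟨y, ?_⟩
        have : (EC g Q).d 1 0 y = x := by
          rw [EC_d_one_zero]
          have := congrArg Subtype.val hy
          exact this
        exact this
      · show Epi ((ECπ g Q).f 0)
        rw [ECπ_f_zero]
        exact (ModuleCat.epi_iff_surjective _).2 hg
    | (n+1) =>
      rw [quasiIsoAt_iff_exactAt' _ _ (ChainComplex.exactAt_succ_single_obj _ _)]
      exact EC_exactAt_succ g Q n⟩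

/-- Dimension shifting at the level of concrete exactness. -/
lemma yexact_shift (j : ℕ) (Y : ModuleCat.{u} R) :
    YExactAt (EC g Q) (j+1) Y ↔ YExactAt Q.complex j Y := by
  unfold YExactAt
  simp only [EC_d_succ]
  exact Iff.rfl

/-- From concrete exactness in degree 0 with coefficients in the kernel, the
sequence splits and `M` is finitely generated projective. -/
lemma fgproj_of_yexact [Module.Finite R P] (hg : Function.Surjective g)
    (hy : YExactAt (EC g Q) 0 (ModuleCat.of R (LinearMap.ker g))) :
    Module.Finite R M ∧ Module.Projective R M := by
  obtain ⟨φ, hφ⟩ := hy (pr0 g Q) (by rw [EC_d_succ]; exact d_comp_pr0 g Q)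
  rw [EC_d_one_zero] at hφ; replace hφ := (Category.assoc (pr0 g Q) _ _).symm.trans hφ
  haveI := epi_pr0 g Q
  have hiφ : ModuleCat.ofHom (LinearMap.ker g).subtype ≫ φ = 𝟙 _ := by
    exact (cancel_epi (pr0 g Q)).1 (hφ.trans (Category.comp_id _).symm)
  -- φ is a linear retraction of the inclusion of the kernel
  have hφ2 : ∀ k : LinearMap.ker g, φ k.1 = k := fun k =>
    congrArg (fun (f : ModuleCat.of R (LinearMap.ker g) ⟶ ModuleCat.of R (LinearMap.ker g))
      => f k) hiφ
  -- build a section of g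
  set φ' : P →ₗ[R] LinearMap.ker g := φ.hom with hφ'
  set s : P →ₗ[R] P := LinearMap.id - (LinearMap.ker g).subtype ∘ₗ φ' with hs
  have hker : LinearMap.ker g ≤ LinearMap.ker s := by
    intro x hx
    have : φ' x = ⟨x, hx⟩ := hφ2 ⟨x, hx⟩
    simp [hs, LinearMap.mem_ker, this]
  set e := g.quotKerEquivOfSurjective hg with he
  set σ : M →ₗ[R] P := ((LinearMap.ker g).liftQ s hker) ∘ₗ e.symm.toLinearMap with hσ
  have hgσ : ∀ x, g (σ x) = x := by
    intro x
    obtain ⟨p, rfl⟩ := hg x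
    have hemk : e (Submodule.Quotient.mk p) = g p := by
      simp [he, LinearMap.quotKerEquivOfSurjective, LinearMap.quotKerEquivRange]
    have hsymm : e.symm (g p) = Submodule.Quotient.mk p := by
      rw [← hemk, LinearEquiv.symm_apply_apply]
    have : σ (g p) = s p := by
      rw [hσ]
      show ((LinearMap.ker g).liftQ s hker) (e.symm (g p)) = s p
      rw [hsymm, Submodule.liftQ_apply]
    rw [this, hs]
    have : g ((LinearMap.ker g).subtype (φ' p)) = 0 := (φ' p).2
    simp [this]
  constructor
  · exact Module.Finite.of_surjective g hg
  · exact Module.Projective.of_split σ g (LinearMap.ext hgσ)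

end Extend

section Coeff

/-- Concrete exactness with coefficients in `R` yields it for `Rⁿ`. -/
lemma yexact_pi (Cx : ChainComplex (ModuleCat.{u} R) ℕ) (j : ℕ)
    (h : YExactAt Cx j (ModuleCat.of R R)) (n : ℕ) :
    YExactAt Cx j (ModuleCat.of R (Fin n → R)) := by
  intro e he
  have comp : ∀ i : Fin n, ∃ φ : Cx.X j ⟶ ModuleCat.of R R,
      Cx.d (j+1) j ≫ φ = e ≫ ModuleCat.ofHom (LinearMap.proj i) := by
    intro i
    refine h (e ≫ ModuleCat.ofHom (LinearMap.proj i)) ?_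
    rw [← Category.assoc, he, Limits.zero_comp]
  choose φ hφ using comp
  refine ⟨ModuleCat.ofHom (LinearMap.pi (fun i => (φ i).hom)), ?_⟩
  ext x i
  exact congrArg (fun (f : Cx.X (j+1) ⟶ ModuleCat.of R R) => f x) (hφ i)

/-- Concrete exactness with coefficients in `R` yields it for any
finitely generated projective module. -/
lemma yexact_coeff (Cx : ChainComplex (ModuleCat.{u} R) ℕ) (j : ℕ)
    (h : YExactAt Cx j (ModuleCat.of R R)) (K' : Type u) [AddCommGroup K'] [Module R K']
    [Module.Finite R K'] [Module.Projective R K'] :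
    YExactAt Cx j (ModuleCat.of R K') := by
  obtain ⟨n, f, sec, hfs, hsi, hfsec⟩ := Module.Finite.exists_comp_eq_id_of_projective R K'
  intro e he
  obtain ⟨φ, hφ⟩ := yexact_pi Cx j h n (e ≫ ModuleCat.ofHom sec)
    (by rw [← Category.assoc, he, Limits.zero_comp])
  refine ⟨φ ≫ ModuleCat.ofHom f, ?_⟩
  rw [← Category.assoc, hφ, Category.assoc]
  have : ModuleCat.ofHom sec ≫ ModuleCat.ofHom f = 𝟙 (ModuleCat.of R K') := by
    ext x
    exact congrArg (fun (l : K' →ₗ[R] K') => l x) hfsec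
  rw [this, Category.comp_id]

end Coeff

section Top

variable (R) in
lemma res_finite : ∀ (n : ℕ) (M : Type u) [AddCommGroup M] [Module R M],
    HasFGProjRes R n M → Module.Finite R M := by
  intro n M _ _ h
  match n, h with
  | 0, h => exact h.1
  | (n+1), h =>
    obtain ⟨P, iP1, iP2, f, hPf, hPp, hf, hres⟩ := h
    exact Module.Finite.of_surjective f hf

variable (R) in
lemma res_fp : ∀ (n : ℕ) (M : Type u) [AddCommGroup M] [Module R M],
    HasFGProjRes R n M → Module.FinitePresentation R M := by
  intro n M _ _ h
  match n, h with
  | 0, h =>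
    haveI := h.1; haveI := h.2
    exact Module.finitePresentation_of_projective R M
  | (n+1), h =>
    obtain ⟨P, iP1, iP2, f, hPf, hPp, hf, hres⟩ := h
    haveI := hPf; haveI := hPp
    haveI : Module.FinitePresentation R P := Module.finitePresentation_of_projective R P
    haveI : Module.Finite R (LinearMap.ker f) := res_finite R n _ hres
    exact Module.finitePresentation_of_surjective f hf (Module.Finite.iff_fg.1 ‹_›)

lemma proj_vanish {N : Type u} [AddCommGroup N] [Module R N] (hN : Module.Projective R N)
    (j : ℕ) (Y : Type u) [AddCommGroup Y] [Module R Y] :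
    Subsingleton (extMod R N Y (j+1)) := by
  haveI : CategoryTheory.Projective (ModuleCat.of R N) := (IsProjective.iff_projective _).1 hN
  exact subsingleton_of_isZero
    (isZero_Ext_succ_of_projective (ModuleCat.of R N) (ModuleCat.of R Y) j)

/-- Dimension shifting for Ext. -/
lemma step_iff {M P : Type u} [AddCommGroup M] [Module R M] [AddCommGroup P] [Module R P]
    [Module.Projective R P] (g : P →ₗ[R] M) (hg : Function.Surjective g)
    (j : ℕ) (Y : Type u) [AddCommGroup Y] [Module R Y] :
    Subsingleton (extMod R M Y (j+2)) ↔
      Subsingleton (extMod R (LinearMap.ker g) Y (j+1)) := by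
  let Q := ProjectiveResolution.of (ModuleCat.of R (LinearMap.ker g))
  rw [show j+2 = (j+1)+1 from rfl,
    subsingleton_ext_iff (EPR g Q hg) (j+1) (ModuleCat.of R Y),
    show (EPR g Q hg).complex = EC g Q from rfl,
    yexact_shift g Q j (ModuleCat.of R Y),
    ← subsingleton_ext_iff Q j (ModuleCat.of R Y)]

/-- Lifting the Ext-vanishing hypothesis to higher degrees for modules with a finite
free resolution. -/
lemma vanish_lift (m : ℕ) (h₀ : ∀ (N : Type u) [AddCommGroup N] [Module R N],
      Module.FinitePresentation R N → Subsingleton (extMod R N R (m + 1))) :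
    ∀ (t n : ℕ) (M : Type u) [AddCommGroup M] [Module R M],
      HasFGProjRes R n M → Subsingleton (extMod R M R (m + 1 + t)) := by
  intro t
  induction t with
  | zero =>
    intro n M _ _ hres
    exact h₀ M (res_fp R n M hres)
  | succ t ih =>
    intro n M _ _ hres
    match n, hres with
    | 0, hres =>
      rw [show m+1+(t+1) = (m+t+1)+1 from by omega]
      exact proj_vanish hres.2 (m+t+1) R
    | (n+1), hres =>
      obtain ⟨P, iP1, iP2, f, hPf, hPp, hf, hres'⟩ := hres
      haveI := hPp
      rw [show m+1+(t+1) = (m+t)+2 from by omega, step_iff f hf (m+t) R,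
        show (m+t)+1 = m+1+t from by omega]
      exact ih n (LinearMap.ker f) hres'

/-- Shortening a finite resolution by one, given Ext-vanishing. -/
lemma shorten : ∀ (k : ℕ) (M : Type u) [AddCommGroup M] [Module R M],
    HasFGProjRes R (k+1) M → Subsingleton (extMod R M R (k+1)) → HasFGProjRes R k M := by
  intro k
  induction k with
  | zero =>
    intro M _ _ hres hext
    obtain ⟨P, iP1, iP2, f, hPf, hPp, hf, hres'⟩ := hres
    haveI := hPf; haveI := hPp; haveI := hres'.1; haveI := hres'.2
    let Q := ProjectiveResolution.of (ModuleCat.of R (LinearMap.ker f))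
    rw [subsingleton_ext_iff (EPR f Q hf) 0 (ModuleCat.of R R)] at hext
    exact fgproj_of_yexact f Q hf (yexact_coeff _ 0 hext (LinearMap.ker f))
  | succ k ih =>
    intro M _ _ hres hext
    obtain ⟨P, iP1, iP2, f, hPf, hPp, hf, hres'⟩ := hres
    haveI := hPf; haveI := hPp
    rw [show k+1+1 = k+2 from rfl, step_iff f hf k R] at hext
    exact ⟨P, iP1, iP2, f, hPf, hPp, hf, ih (LinearMap.ker f) hres' hext⟩

end Top

end FPDAux

/-- `fPD(R) ≤ FP-id_R(R)` : the small finitistic dimension of `R` is at most its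
self-FP-injective dimension. -/
theorem fPDle_of_fpInjDimLE (R : Type u) [CommRing R] (d : ℕ) (h : FPInjDimLE R d) :
    fPDle R d := by
  obtain ⟨m, hmd, h₀⟩ := h
  have main : ∀ (n : ℕ) (M : Type u) [AddCommGroup M] [Module R M],
      HasFGProjRes R n M → ∃ k ≤ d, HasFGProjRes R k M := by
    intro n
    induction n with
    | zero =>
      intro M _ _ hres
      exact ⟨0, Nat.zero_le d, hres⟩
    | succ n ih =>
      intro M _ _ hres
      obtain ⟨P, iP1, iP2, f, hPf, hPp, hf, hres'⟩ := hres
      obtain ⟨k, hkd, hkres⟩ := ih (LinearMap.ker f) hres'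
      have hMres : HasFGProjRes R (k+1) M := ⟨P, iP1, iP2, f, hPf, hPp, hf, hkres⟩
      by_cases hk : k + 1 ≤ d
      · exact ⟨k+1, hk, hMres⟩
      · have hkd' : k = d := by omega
        have hvan : Subsingleton (extMod R M R (k+1)) := by
          rw [show k+1 = m+1+(k-m) from by omega]
          exact FPDAux.vanish_lift m h₀ (k-m) (k+1) M hMres
        exact ⟨k, le_of_eq hkd', FPDAux.shorten k M hMres hvan⟩
  intro M _ _ ⟨n, hres⟩
  exact main n M hres
end

section
/- Let R be a commutative ring such that every finitely presented cyclic R-module has projective dimension at most d (i.e., R is a weak (1,d)-ring in the sense of Mahdou). Then fPD(R) ≤ d. -/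
universe u

/-- `HasProjResLen R d M` : there is an exact sequence `0 → P_d → ⋯ → P_0 → M → 0`
with each `P_i` projective; equivalently, the projective dimension of `M` is at most `d`. -/
def HasProjResLen (R : Type u) [CommRing R] :
    ℕ → (M : Type u) → [AddCommGroup M] → [Module R M] → Prop
  | 0, M, _, _ => Module.Projective R M
  | d + 1, M, _, _ => ∃ (P : Type u) (_ : AddCommGroup P) (_ : Module R P) (f : P →ₗ[R] M),
      Module.Projective R P ∧ Function.Surjective f ∧
      HasProjResLen R d (LinearMap.ker f)


/-! ### Auxiliary machinery -/

open LinearMap Function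

namespace FPD

variable {R : Type u} [CommRing R]

lemma tensor_subsingleton (W K : Type u) [AddCommGroup W] [Module R W] [AddCommGroup K]
    [Module R K] [Subsingleton W] : Subsingleton (TensorProduct R W K) := by
  constructor
  have hz : ∀ x : TensorProduct R W K, x = 0 := by
    intro x
    induction x using TensorProduct.induction_on with
    | zero => rfl
    | tmul w k => rw [Subsingleton.elim w (0 : W), TensorProduct.zero_tmul]
    | add x y hx hy => rw [hx, hy, add_zero]
  intro a b; rw [hz a, hz b]

lemma subsingleton_bot (M : Type u) [AddCommGroup M] [Module R M] :
    Subsingleton (⊥ : Submodule R M) :=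
  ⟨fun a b => Subtype.ext (by
    rw [(Submodule.mem_bot R).mp a.2, (Submodule.mem_bot R).mp b.2])⟩

/-- The key diagram chase: a "dimension shifting" step for vanishing of Tor, expressed
entirely in terms of injectivity of tensored inclusions. -/
lemma chase {S P K Z Q W Q' : Type u}
    [AddCommGroup S] [Module R S] [AddCommGroup P] [Module R P] [AddCommGroup K] [Module R K]
    [AddCommGroup Z] [Module R Z] [AddCommGroup Q] [Module R Q]
    [AddCommGroup W] [Module R W] [AddCommGroup Q'] [Module R Q']
    [Module.Flat R P] [Module.Flat R Q']
    (i : S →ₗ[R] P) (p : P →ₗ[R] K) (hip : Function.Exact i p)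
    (hi : Function.Injective i) (hp : Function.Surjective p)
    (g : Z →ₗ[R] Q) (hg : Function.Injective g)
    (h : W →ₗ[R] Q') (π : Q' →ₗ[R] Z) (hhπ : Function.Exact h π)
    (_hh : Function.Injective h) (hπ : Function.Surjective π)
    (HK : Function.Injective (LinearMap.rTensor K h)) :
    Function.Injective (LinearMap.rTensor S g) := by
  rw [injective_iff_map_eq_zero]
  intro v hv
  obtain ⟨s, rfl⟩ := LinearMap.rTensor_surjective S (g := π) hπ v
  have hPg : Function.Injective (LinearMap.rTensor P g) :=
    Module.Flat.rTensor_preserves_injective_linearMap g hg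
  have h2 : (LinearMap.lTensor Z i) ((LinearMap.rTensor S π) s) = 0 := by
    apply (injective_iff_map_eq_zero _).mp hPg
    have e1 : (LinearMap.rTensor P g).comp (LinearMap.lTensor Z i)
        = (LinearMap.lTensor Q i).comp (LinearMap.rTensor S g) := by
      rw [LinearMap.rTensor_comp_lTensor, LinearMap.lTensor_comp_rTensor]
    have := LinearMap.congr_fun e1 ((LinearMap.rTensor S π) s)
    simp only [LinearMap.comp_apply] at this
    rw [this, hv, map_zero]
  set sP := (LinearMap.lTensor Q' i) s with hsP
  have h3 : (LinearMap.rTensor P π) sP = 0 := by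
    have e1 : (LinearMap.rTensor P π).comp (LinearMap.lTensor Q' i)
        = (LinearMap.lTensor Z i).comp (LinearMap.rTensor S π) := by
      rw [LinearMap.rTensor_comp_lTensor, LinearMap.lTensor_comp_rTensor]
    have := LinearMap.congr_fun e1 s
    simp only [LinearMap.comp_apply] at this
    rw [hsP, this, h2]
  obtain ⟨t, ht⟩ := (Module.Flat.rTensor_exact P hhπ sP).mp h3
  have h5 : (LinearMap.lTensor W p) t = 0 := by
    apply (injective_iff_map_eq_zero _).mp HK
    have e1 : (LinearMap.rTensor K h).comp (LinearMap.lTensor W p)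
        = (LinearMap.lTensor Q' p).comp (LinearMap.rTensor P h) := by
      rw [LinearMap.rTensor_comp_lTensor, LinearMap.lTensor_comp_rTensor]
    have e2 := LinearMap.congr_fun e1 t
    simp only [LinearMap.comp_apply] at e2
    rw [e2, ht, hsP]
    have e3 : (LinearMap.lTensor Q' p).comp (LinearMap.lTensor Q' i)
        = LinearMap.lTensor Q' (p.comp i) := (LinearMap.lTensor_comp Q' p i).symm
    have := LinearMap.congr_fun e3 s
    simp only [LinearMap.comp_apply] at this
    rw [this, hip.linearMap_comp_eq_zero, LinearMap.lTensor_zero, LinearMap.zero_apply]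
  obtain ⟨u, hu⟩ := (lTensor_exact W hip hp t).mp h5
  have hQ'i : Function.Injective (LinearMap.lTensor Q' i) :=
    Module.Flat.lTensor_preserves_injective_linearMap i hi
  have h7 : (LinearMap.rTensor S h) u = s := by
    apply hQ'i
    have e1 : (LinearMap.lTensor Q' i).comp (LinearMap.rTensor S h)
        = (LinearMap.rTensor P h).comp (LinearMap.lTensor W i) := by
      rw [LinearMap.rTensor_comp_lTensor, LinearMap.lTensor_comp_rTensor]
    have := LinearMap.congr_fun e1 u
    simp only [LinearMap.comp_apply] at this
    rw [this, hu, ht, hsP]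
  rw [← h7]
  have e1 : (LinearMap.rTensor S π).comp (LinearMap.rTensor S h)
      = LinearMap.rTensor S (π.comp h) := (LinearMap.rTensor_comp S π h).symm
  have := LinearMap.congr_fun e1 u
  simp only [LinearMap.comp_apply] at this
  rw [this, hhπ.linearMap_comp_eq_zero, LinearMap.rTensor_zero, LinearMap.zero_apply]

end FPD

/-- `CoRes R k S`: there is a chain of `k` short exact sequences `0 → K_{i+1} → P_i → K_i → 0`
with all `P_i` projective, starting with `K_k = S` (so `S` is a `k`-th syzygy). -/
def FPD.CoRes (R : Type u) [CommRing R] :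
    ℕ → (S : Type u) → [AddCommGroup S] → [Module R S] → Prop
  | 0, _, _, _ => True
  | k + 1, S, _, _ => ∃ (P : Type u) (_ : AddCommGroup P) (_ : Module R P)
      (K : Type u) (_ : AddCommGroup K) (_ : Module R K)
      (i : S →ₗ[R] P) (p : P →ₗ[R] K),
      Module.Projective R P ∧ Function.Injective i ∧ Function.Surjective p ∧
      Function.Exact i p ∧ FPD.CoRes R k K

namespace FPD

variable {R : Type u} [CommRing R]

lemma coRes_down : ∀ (k : ℕ) (S : Type u) [AddCommGroup S] [Module R S],
    FPD.CoRes R (k + 1) S → FPD.CoRes R k S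
  | 0, S, _, _, _ => trivial
  | (k+1), S, _, _, hyp => by
    obtain ⟨P, _, _, K, _, _, i, p, hP, hi, hp, hex, hK⟩ := hyp
    exact ⟨P, _, _, K, _, _, i, p, hP, hi, hp, hex, FPD.coRes_down k K hK⟩

lemma coRes_of_le {k n : ℕ} (hkn : k ≤ n) (S : Type u) [AddCommGroup S] [Module R S]
    (hS : FPD.CoRes R n S) : FPD.CoRes R k S := by
  obtain ⟨j, rfl⟩ := Nat.le.dest hkn
  induction j with
  | zero => exact hS
  | succ j ih => exact ih (Nat.le_add_right k j) (FPD.coRes_down (k+j) S hS)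

lemma hasProjResLen_congr : ∀ (k : ℕ) (A B : Type u) [AddCommGroup A] [Module R A]
    [AddCommGroup B] [Module R B], (A ≃ₗ[R] B) → HasProjResLen R k A → HasProjResLen R k B
  | 0, A, B, _, _, _, _, e, hA => by
    have hA' : Module.Projective R A := hA
    exact (Module.Projective.of_equiv e : Module.Projective R B)
  | (k+1), A, B, _, _, _, _, e, hA => by
    obtain ⟨P, _, _, f, hP, hf, hker⟩ := hA
    refine ⟨P, _, _, e.toLinearMap.comp f, hP, e.surjective.comp hf, ?_⟩
    have hkeq : LinearMap.ker (e.toLinearMap.comp f) = LinearMap.ker f := by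
      rw [LinearMap.ker_comp, LinearMap.ker_eq_bot.mpr e.injective, Submodule.comap_bot]
    exact FPD.hasProjResLen_congr k _ _ (LinearEquiv.ofEq _ _ hkeq.symm) hker

lemma projective_prod (A B : Type u) [AddCommGroup A] [Module R A] [AddCommGroup B]
    [Module R B] (hA : Module.Projective R A) (hB : Module.Projective R B) :
    Module.Projective R (A × B) := by
  obtain ⟨sA, hsA⟩ := hA
  obtain ⟨sB, hsB⟩ := hB
  exact Module.Projective.of_split (M := (A →₀ R) × (B →₀ R))
    (LinearMap.prodMap sA sB)
    (LinearMap.prodMap (Finsupp.linearCombination R _root_.id)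
      (Finsupp.linearCombination R _root_.id))
    (by apply LinearMap.ext; intro x; exact Prod.ext (hsA x.1) (hsB x.2))

lemma hasProjResLen_prod : ∀ (k : ℕ) (A B : Type u) [AddCommGroup A] [Module R A]
    [AddCommGroup B] [Module R B], HasProjResLen R k A → Module.Projective R B →
    HasProjResLen R k (A × B)
  | 0, A, B, _, _, _, _, hA, hB => by
    have hA' : Module.Projective R A := hA
    exact (FPD.projective_prod A B hA' hB : Module.Projective R (A × B))
  | (k+1), A, B, _, _, _, _, hA, hB => by
    obtain ⟨P, _, _, f, hP, hf, hker⟩ := hA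
    refine ⟨P × B, _, _, f.prodMap LinearMap.id, FPD.projective_prod P B hP hB,
      hf.prodMap Function.surjective_id, ?_⟩
    have e : ↥(LinearMap.ker f) ≃ₗ[R] ↥(LinearMap.ker (f.prodMap (LinearMap.id : B →ₗ[R] B))) :=
      { toFun := fun z => ⟨(z.1, 0), by
          have hz : f z.1 = 0 := z.2
          show (f z.1, (0:B)) = 0
          rw [hz]; rfl⟩
        map_add' := fun a b => by ext <;> simp
        map_smul' := fun c a => by ext <;> simp
        invFun := fun x => ⟨x.1.1, by
          have hx : ((f x.1.1, x.1.2) : A × B) = 0 := x.2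
          exact congrArg Prod.fst hx⟩
        left_inv := fun z => by ext; rfl
        right_inv := fun x => by
          have hx : ((f x.1.1, x.1.2) : A × B) = 0 := x.2
          ext
          · rfl
          · exact (congrArg Prod.snd hx).symm }
    exact FPD.hasProjResLen_congr k _ _ e hker

/-- The inductive transport of injectivity of tensored inclusions down a chain of syzygies. -/
lemma ind : ∀ (k : ℕ) (Z : Type u) [AddCommGroup Z] [Module R Z],
    HasProjResLen R k Z → ∀ (S : Type u) [AddCommGroup S] [Module R S],
    FPD.CoRes R (k + 1) S →
    ∀ (Q : Type u) [AddCommGroup Q] [Module R Q] (g : Z →ₗ[R] Q),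
    Function.Injective g → Function.Injective (LinearMap.rTensor S g)
  | 0, Z, _, _, hZ, S, _, _, hS, Q, _, _, g, hg => by
    have hZp : Module.Projective R Z := hZ
    haveI : Module.Flat R Z := Module.Flat.of_projective (R := R) (M := Z)
    obtain ⟨P, _, _, K, _, _, i, p, hP, hi, hp, hex, -⟩ := hS
    haveI : Module.Flat R P := by
      haveI := hP; exact Module.Flat.of_projective (R := R)
    haveI := FPD.subsingleton_bot (R := R) Z
    haveI := FPD.tensor_subsingleton (R := R) (⊥ : Submodule R Z) K
    refine FPD.chase i p hex hi hp g hg (⊥ : Submodule R Z).subtype LinearMap.id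
      ?_ (Submodule.injective_subtype _) Function.surjective_id
      (Function.injective_of_subsingleton _)
    exact LinearMap.exact_iff.mpr (by rw [LinearMap.ker_id, Submodule.range_subtype])
  | (k+1), Z, _, _, hZ, S, _, _, hS, Q, _, _, g, hg => by
    obtain ⟨Q', _, _, π, hQ', hπ, hker⟩ := hZ
    obtain ⟨P, _, _, K, _, _, i, p, hP, hi, hp, hex, hK⟩ := hS
    haveI : Module.Flat R P := by
      haveI := hP; exact Module.Flat.of_projective (R := R)
    haveI : Module.Flat R Q' := by
      haveI := hQ'; exact Module.Flat.of_projective (R := R)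
    refine FPD.chase i p hex hi hp g hg (LinearMap.ker π).subtype π
      (LinearMap.exact_subtype_ker_map π) (Submodule.injective_subtype _) hπ ?_
    exact FPD.ind k (LinearMap.ker π) hker K hK Q' (LinearMap.ker π).subtype
      (Submodule.injective_subtype _)

/-- An explicit splitting equivalence for a split surjection. -/
noncomputable def splitEquiv {X B : Type u} [AddCommGroup X] [Module R X]
    [AddCommGroup B] [Module R B]
    (pm : X →ₗ[R] B) (s : B →ₗ[R] X) (hs : ∀ b, pm (s b) = b) :
    X ≃ₗ[R] (↥(LinearMap.ker pm) × B) where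
  toFun x := (⟨x - s (pm x), by simp [LinearMap.mem_ker, hs]⟩, pm x)
  map_add' x y := by
    ext
    · show x + y - s (pm (x + y)) = (x - s (pm x)) + (y - s (pm y))
      rw [map_add, map_add]; abel
    · simp
  map_smul' c x := by
    ext
    · show c • x - s (pm (c • x)) = c • (x - s (pm x))
      rw [map_smul, map_smul, smul_sub]
    · simp
  invFun kb := kb.1.1 + s kb.2
  left_inv x := by simp
  right_inv kb := by
    have hk : pm kb.1.1 = 0 := kb.1.2
    ext
    · show kb.1.1 + s kb.2 - s (pm (kb.1.1 + s kb.2)) = kb.1.1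
      rw [map_add, hk, zero_add, hs]; abel
    · show pm (kb.1.1 + s kb.2) = kb.2
      rw [map_add, hk, zero_add, hs]

/-- Schanuel's lemma. -/
lemma schanuel {Y Q₀ A : Type u} [AddCommGroup Y] [Module R Y]
    [AddCommGroup Q₀] [Module R Q₀] [AddCommGroup A] [Module R A]
    (f : Q₀ →ₗ[R] Y) (q : A →ₗ[R] Y) (hf : Function.Surjective f)
    (hq : Function.Surjective q) (hQ₀ : Module.Projective R Q₀) (hA : Module.Projective R A) :
    Nonempty ((↥(LinearMap.ker q) × Q₀) ≃ₗ[R] (↥(LinearMap.ker f) × A)) := by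
  haveI := hQ₀; haveI := hA
  set φ : A × Q₀ →ₗ[R] Y := q.comp (LinearMap.fst R A Q₀) - f.comp (LinearMap.snd R A Q₀) with hφ
  set X := LinearMap.ker φ with hX
  set pr1 : X →ₗ[R] A := (LinearMap.fst R A Q₀).comp X.subtype with hpr1
  set pr2 : X →ₗ[R] Q₀ := (LinearMap.snd R A Q₀).comp X.subtype with hpr2
  have hmem : ∀ x : A × Q₀, x ∈ X ↔ q x.1 = f x.2 := by
    intro x
    simp [hX, hφ, LinearMap.mem_ker, sub_eq_zero]
  have hpr1s : Function.Surjective pr1 := by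
    intro a
    obtain ⟨b, hb⟩ := hf (q a)
    exact ⟨⟨(a, b), (hmem _).mpr hb.symm⟩, rfl⟩
  have hpr2s : Function.Surjective pr2 := by
    intro b
    obtain ⟨a, ha⟩ := hq (f b)
    exact ⟨⟨(a, b), (hmem _).mpr ha⟩, rfl⟩
  obtain ⟨s₁, hs₁⟩ := Module.projective_lifting_property pr1 LinearMap.id hpr1s
  obtain ⟨s₂, hs₂⟩ := Module.projective_lifting_property pr2 LinearMap.id hpr2s
  have hs₁' : ∀ a, pr1 (s₁ a) = a := fun a => LinearMap.congr_fun hs₁ a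
  have hs₂' : ∀ b, pr2 (s₂ b) = b := fun b => LinearMap.congr_fun hs₂ b
  have e₁ : ↥(LinearMap.ker pr1) ≃ₗ[R] ↥(LinearMap.ker f) :=
    { toFun := fun x => ⟨(x.1 : A × Q₀).2, by
        have hx : q (x.1 : A × Q₀).1 = f (x.1 : A × Q₀).2 := (hmem _).mp x.1.2
        have h0 : (x.1 : A × Q₀).1 = 0 := x.2
        rw [LinearMap.mem_ker, ← hx, h0, map_zero]⟩
      map_add' := fun a b => by ext; rfl
      map_smul' := fun c a => by ext; rfl
      invFun := fun z => ⟨⟨⟨(0 : A), z.1⟩, (hmem _).mpr (by rw [map_zero, z.2])⟩, by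
        show ((0 : A), (z.1 : Q₀)).1 = 0; rfl⟩
      left_inv := fun x => by
        have h0 : (x.1 : A × Q₀).1 = 0 := x.2
        ext
        · exact h0.symm
        · rfl
      right_inv := fun z => rfl }
  have e₂ : ↥(LinearMap.ker pr2) ≃ₗ[R] ↥(LinearMap.ker q) :=
    { toFun := fun x => ⟨(x.1 : A × Q₀).1, by
        have hx : q (x.1 : A × Q₀).1 = f (x.1 : A × Q₀).2 := (hmem _).mp x.1.2
        have h0 : (x.1 : A × Q₀).2 = 0 := x.2
        rw [LinearMap.mem_ker, hx, h0, map_zero]⟩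
      map_add' := fun a b => by ext; rfl
      map_smul' := fun c a => by ext; rfl
      invFun := fun z => ⟨⟨⟨z.1, (0 : Q₀)⟩, (hmem _).mpr (by rw [map_zero, z.2])⟩, by
        show ((z.1 : A), (0 : Q₀)).2 = 0; rfl⟩
      left_inv := fun x => by
        have h0 : (x.1 : A × Q₀).2 = 0 := x.2
        ext
        · rfl
        · exact h0.symm
      right_inv := fun z => rfl }
  exact ⟨((e₂.symm.prodCongr (LinearEquiv.refl R Q₀)).trans
      (FPD.splitEquiv pr2 s₂ hs₂').symm).trans
      ((FPD.splitEquiv pr1 s₁ hs₁').trans (e₁.prodCongr (LinearEquiv.refl R A)))⟩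

/-- A `d`-th syzygy is flat whenever all cyclic finitely presented modules have projective
dimension at most `d`. -/
lemma flat_of_coRes (d : ℕ)
    (hcyc : ∀ I : Ideal R, I.FG → ∃ k ≤ d, HasProjResLen R k (R ⧸ I))
    (S : Type u) [AddCommGroup S] [Module R S] (hS : FPD.CoRes R d S) :
    Module.Flat R S := by
  rw [Module.Flat.iff_rTensor_injective]
  intro I hIfg
  obtain ⟨k, hkd, hres⟩ := hcyc I hIfg
  match k, hkd, hres with
  | 0, hkd, hres =>
    have hproj : Module.Projective R (R ⧸ I) := hres
    obtain ⟨σ, hσ⟩ := Module.projective_lifting_property I.mkQ LinearMap.id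
      (Submodule.mkQ_surjective I)
    have hρmem : ∀ x : R, x - σ (I.mkQ x) ∈ I := by
      intro x
      have : I.mkQ (x - σ (I.mkQ x)) = 0 := by
        rw [map_sub]
        have := LinearMap.congr_fun hσ (I.mkQ x)
        simp only [LinearMap.comp_apply, LinearMap.id_apply] at this
        rw [this, sub_self]
      rwa [← LinearMap.mem_ker, Submodule.ker_mkQ] at this
    set ρ : R →ₗ[R] ↥I :=
      LinearMap.codRestrict I (LinearMap.id - σ.comp I.mkQ) (fun x => hρmem x) with hρ
    have hρi : ∀ y : ↥I, ρ (I.subtype y) = y := by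
      intro y
      ext
      show (y : R) - σ (I.mkQ y) = y
      have : I.mkQ (y : R) = 0 := by
        rw [← LinearMap.mem_ker, Submodule.ker_mkQ]; exact y.2
      rw [this, map_zero, sub_zero]
    have : Function.Injective ((LinearMap.rTensor S ρ).comp (LinearMap.rTensor S I.subtype)) := by
      rw [← LinearMap.rTensor_comp]
      have : ρ.comp I.subtype = LinearMap.id := LinearMap.ext hρi
      rw [this, LinearMap.rTensor_id]
      exact fun a b hab => hab
    exact Function.Injective.of_comp this
  | (k' + 1), hkd, hres =>
    obtain ⟨Q₀, _, _, f, hQ₀, hf, hker⟩ := hres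
    obtain ⟨e⟩ := FPD.schanuel f I.mkQ hf (Submodule.mkQ_surjective I) hQ₀
      (Module.Projective.of_free)
    have eI : ↥I ≃ₗ[R] ↥(LinearMap.ker (I.mkQ)) :=
      LinearEquiv.ofEq _ _ (Submodule.ker_mkQ I).symm
    have hIQ₀ : HasProjResLen R k' (↥I × Q₀) := by
      have h1 : HasProjResLen R k' (↥(LinearMap.ker f) × R) :=
        FPD.hasProjResLen_prod k' _ R hker (Module.Projective.of_free)
      exact FPD.hasProjResLen_congr k' _ _
        ((eI.prodCongr (LinearEquiv.refl R Q₀)).trans e).symm h1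
    have hCo : FPD.CoRes R (k' + 1) S := FPD.coRes_of_le hkd S hS
    have hg' : Function.Injective
        (LinearMap.rTensor S ((I.subtype).prodMap (LinearMap.id : Q₀ →ₗ[R] Q₀))) := by
      refine FPD.ind k' _ hIQ₀ S hCo _ _ ?_
      exact Function.Injective.prodMap (Submodule.injective_subtype I) (fun a b hab => hab)
    have hinl : Function.Injective (LinearMap.rTensor S (LinearMap.inl R (↥I) Q₀)) := by
      have : Function.Injective ((LinearMap.rTensor S (LinearMap.fst R (↥I) Q₀)).comp
          (LinearMap.rTensor S (LinearMap.inl R (↥I) Q₀))) := by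
        rw [← LinearMap.rTensor_comp, LinearMap.fst_comp_inl, LinearMap.rTensor_id]
        exact fun a b hab => hab
      exact Function.Injective.of_comp this
    have hcomm : ((I.subtype).prodMap (LinearMap.id : Q₀ →ₗ[R] Q₀)).comp
        (LinearMap.inl R (↥I) Q₀) = (LinearMap.inl R R Q₀).comp I.subtype := by
      ext x <;> rfl
    have : Function.Injective ((LinearMap.rTensor S (LinearMap.inl R R Q₀)).comp
        (LinearMap.rTensor S I.subtype)) := by
      rw [← LinearMap.rTensor_comp, ← hcomm, LinearMap.rTensor_comp]
      exact hg'.comp hinl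
    exact Function.Injective.of_comp this

lemma fgRes_finite : ∀ (k : ℕ) (M : Type u) [AddCommGroup M] [Module R M],
    HasFGProjRes R k M → Module.Finite R M
  | 0, M, _, _, hM => hM.1
  | (k+1), M, _, _, hM => by
    obtain ⟨P, _, _, f, hPfin, hPproj, hf, -⟩ := hM
    exact Module.Finite.of_surjective f hf

lemma fgRes_succ : ∀ (k : ℕ) (M : Type u) [AddCommGroup M] [Module R M],
    HasFGProjRes R k M → HasFGProjRes R (k + 1) M
  | 0, M, _, _, hM => by
    refine ⟨M, _, _, LinearMap.id, hM.1, hM.2, Function.surjective_id, ?_⟩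
    haveI : Subsingleton (⊥ : Submodule R M) := FPD.subsingleton_bot M
    constructor
    · rw [LinearMap.ker_id]; infer_instance
    · rw [LinearMap.ker_id]
      haveI : Module.Free R (⊥ : Submodule R M) := Module.Free.of_subsingleton R _
      exact Module.Projective.of_free
  | (k+1), M, _, _, hM => by
    obtain ⟨P, _, _, f, hPfin, hPproj, hf, hker⟩ := hM
    exact ⟨P, _, _, f, hPfin, hPproj, hf, FPD.fgRes_succ k _ hker⟩

lemma fgRes_pad {k n : ℕ} (hkn : k ≤ n) (M : Type u) [AddCommGroup M] [Module R M]
    (hM : HasFGProjRes R k M) : HasFGProjRes R n M := by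
  obtain ⟨j, rfl⟩ := Nat.le.dest hkn
  induction j with
  | zero => exact hM
  | succ j ih => exact FPD.fgRes_succ (k + j) M (ih (Nat.le_add_right k j))

lemma fgRes_fp (M : Type u) [AddCommGroup M] [Module R M]
    (hM : HasFGProjRes R 1 M) : Module.FinitePresentation R M := by
  obtain ⟨P, _, _, f, hPfin, hPproj, hf, hker⟩ := hM
  haveI := hPfin; haveI := hPproj
  haveI : Module.FinitePresentation R P := Module.finitePresentation_of_projective R P
  haveI : Module.Finite R (LinearMap.ker f) := hker.1
  exact Module.finitePresentation_of_surjective f hf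
    (Module.Finite.iff_fg.mp ‹Module.Finite R (LinearMap.ker f)›)

lemma build : ∀ (j c : ℕ) (M : Type u) [AddCommGroup M] [Module R M],
    FPD.CoRes R c M → HasFGProjRes R (j + 1) M →
    ∃ (S : Type u) (_ : AddCommGroup S) (_ : Module R S),
      HasFGProjRes R 1 S ∧ FPD.CoRes R (c + j) S ∧
      (Module.Projective R S → HasFGProjRes R j M)
  | 0, c, M, _, _, hc, hres =>
    ⟨M, _, _, hres, hc, fun hproj => ⟨FPD.fgRes_finite 1 M hres, hproj⟩⟩
  | (j+1), c, M, _, _, hc, hres => by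
    obtain ⟨P, _, _, f, hPfin, hPproj, hf, hker⟩ := hres
    have hcker : FPD.CoRes R (c + 1) (LinearMap.ker f) :=
      ⟨P, _, _, M, _, _, (LinearMap.ker f).subtype, f, hPproj,
        Submodule.injective_subtype _, hf, LinearMap.exact_subtype_ker_map f, hc⟩
    obtain ⟨S, _, _, h1, hco, himp⟩ := FPD.build j (c + 1) (LinearMap.ker f) hcker hker
    refine ⟨S, _, _, h1, ?_, fun hproj => ⟨P, _, _, f, hPfin, hPproj, hf, himp hproj⟩⟩
    rw [show c + (j + 1) = c + 1 + j by omega]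
    exact hco

lemma core (d : ℕ)
    (hcyc : ∀ I : Ideal R, I.FG → ∃ k ≤ d, HasProjResLen R k (R ⧸ I))
    (M : Type u) [AddCommGroup M] [Module R M]
    (hM : HasFGProjRes R (d + 1) M) : HasFGProjRes R d M := by
  obtain ⟨S, _, _, h1, hco, himp⟩ := FPD.build d 0 M trivial hM
  haveI : Module.FinitePresentation R S := FPD.fgRes_fp S h1
  haveI : Module.Flat R S := FPD.flat_of_coRes d hcyc S (by
    rw [show d = 0 + d by omega]; exact hco)
  obtain ⟨κ, h₂, h₃, hfac⟩ :=
    Module.Flat.exists_factorization_of_isFinitelyPresented (LinearMap.id : S →ₗ[R] S)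
  exact himp (Module.Projective.of_split h₂ h₃ hfac.symm)

lemma main_aux (d : ℕ)
    (hcyc : ∀ I : Ideal R, I.FG → ∃ k ≤ d, HasProjResLen R k (R ⧸ I)) :
    ∀ (m : ℕ) (M : Type u) [AddCommGroup M] [Module R M],
    HasFGProjRes R m M → ∃ k ≤ d, HasFGProjRes R k M
  | 0, M, _, _, hM => ⟨0, Nat.zero_le d, hM⟩
  | (n+1), M, _, _, hM => by
    by_cases hmd : n + 1 ≤ d
    · exact ⟨n + 1, hmd, hM⟩
    · obtain ⟨P, _, _, f, hPfin, hPproj, hf, hker⟩ := hM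
      obtain ⟨k, hk, hres⟩ := FPD.main_aux d hcyc n (LinearMap.ker f) hker
      have hd : HasFGProjRes R d (LinearMap.ker f) := FPD.fgRes_pad hk _ hres
      have hd1 : HasFGProjRes R (d + 1) M := ⟨P, _, _, f, hPfin, hPproj, hf, hd⟩
      exact ⟨d, le_rfl, FPD.core d hcyc M hd1⟩

end FPD

/-- Every weak `(1, d)`-ring in the sense of Mahdou (every finitely presented cyclic module
has projective dimension at most `d`) has small finitistic dimension at most `d`. -/
theorem fPDle_of_weak_1d_ring_Mahdou (R : Type u) [CommRing R] (d : ℕ)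
    (h : ∀ (M : Type u) [AddCommGroup M] [Module R M],
      Module.FinitePresentation R M → (∃ m : M, Submodule.span R {m} = ⊤) →
      ∃ k ≤ d, HasProjResLen R k M) :
    fPDle R d := by
  have hcyc : ∀ I : Ideal R, I.FG → ∃ k ≤ d, HasProjResLen R k (R ⧸ I) := by
    intro I hI
    have hfp : Module.FinitePresentation R (R ⧸ I) :=
      Module.finitePresentation_of_surjective I.mkQ (Submodule.mkQ_surjective I)
        (by rwa [Submodule.ker_mkQ])
    refine h (R ⧸ I) hfp ⟨I.mkQ 1, ?_⟩
    rw [eq_top_iff]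
    rintro x -
    obtain ⟨r, rfl⟩ := Submodule.mkQ_surjective I x
    have : I.mkQ r = r • I.mkQ 1 := by rw [← map_smul, smul_eq_mul, mul_one]
    rw [this]
    exact Submodule.smul_mem _ r (Submodule.mem_span_singleton_self _)
  intro M _ _ hM
  obtain ⟨m, hm⟩ := hM
  exact FPD.main_aux d hcyc m M hm
end

section
/- Let R be a commutative ring with FP-id_R(R) ≤ 1. Then R is a DW-ring, i.e., every GV-ideal of R equals R. -/
set_option linter.unusedSectionVars false


universe u

open CategoryTheory Opposite

/-- `J` is a GV-ideal: `J` is finitely generated and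
`Hom_R(R/J, R) = Ext_R^1(R/J, R) = 0`. -/
def IsGVIdeal (R : Type u) [CommRing R] (J : Ideal R) : Prop :=
  J.FG ∧ Subsingleton (extMod R (R ⧸ J) R 0) ∧ Subsingleton (extMod R (R ⧸ J) R 1)

/-- `R` is a DW-ring: the only GV-ideal of `R` is `R` itself. -/
def IsDWRing (R : Type u) [CommRing R] : Prop :=
  ∀ J : Ideal R, IsGVIdeal R J → J = ⊤

/-- An element `m` of a module is GV-torsion if `Jm = 0` for some GV-ideal `J`. -/
def IsGVTorsionElem (R : Type u) [CommRing R] {M : Type u} [AddCommGroup M] [Module R M]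
    (m : M) : Prop :=
  ∃ J : Ideal R, IsGVIdeal R J ∧ ∀ r ∈ J, r • m = 0

/-- A module is GV-torsion if each of its elements is GV-torsion. -/
def IsGVTorsion (R : Type u) [CommRing R] (M : Type u) [AddCommGroup M] [Module R M] : Prop :=
  ∀ m : M, IsGVTorsionElem R m

/-- A module is GV-torsion-free if its only GV-torsion element is `0`. -/
def IsGVTorsionFree (R : Type u) [CommRing R] (M : Type u) [AddCommGroup M] [Module R M] : Prop :=
  ∀ m : M, IsGVTorsionElem R m → m = 0

/-- `M` is a `w`-module: `M` is GV-torsion-free and `Ext_R^1(R/J, M) = 0`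
for every GV-ideal `J`. -/
def IsWModule (R : Type u) [CommRing R] (M : Type u) [AddCommGroup M] [Module R M] : Prop :=
  IsGVTorsionFree R M ∧ ∀ J : Ideal R, IsGVIdeal R J → Subsingleton (extMod R (R ⧸ J) M 1)

namespace DWProof

open Limits Projective

variable {R : Type u} [CommRing R]

/-- A chain complex starting with two prescribed differentials, continued by syzygies. -/
noncomputable def resComplex (X₀ X₁ X₂ : ModuleCat.{u} R)
    (d₀ : X₁ ⟶ X₀) (d₁ : X₂ ⟶ X₁) (s : d₁ ≫ d₀ = 0) : ChainComplex (ModuleCat.{u} R) ℕ :=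
  ChainComplex.mk X₀ X₁ X₂ d₀ d₁ s
    (fun S => ⟨syzygies S.f, Projective.d S.f, by erw [Category.assoc, kernel.condition, comp_zero]⟩)

variable (X₀ X₁ X₂ : ModuleCat.{u} R) (d₀ : X₁ ⟶ X₀) (d₁ : X₂ ⟶ X₁) (s : d₁ ≫ d₀ = 0)

instance resComplex_projective [Projective X₀] [Projective X₁] [Projective X₂] (n : ℕ) :
    Projective ((resComplex X₀ X₁ X₂ d₀ d₁ s).X n) := by
  match n with
  | 0 => exact ‹Projective X₀›
  | 1 => exact ‹Projective X₁›
  | 2 => exact ‹Projective X₂›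
  | (n+3) => exact Projective.projective_over _

lemma resComplex_exactAt_succ (hex1 : (ShortComplex.mk d₁ d₀ s).Exact) (n : ℕ) :
    (resComplex X₀ X₁ X₂ d₀ d₁ s).ExactAt (n + 1) := by
  rw [HomologicalComplex.exactAt_iff' _ (n + 1 + 1) (n + 1) n (by simp) (by simp)]
  dsimp [resComplex, HomologicalComplex.sc', HomologicalComplex.shortComplexFunctor',
      ChainComplex.mk]
  match n with
  | 0 => exact hex1
  | n + 1 =>
    let sc : ∀ S : ShortComplex (ModuleCat.{u} R),
        Σ' (X₃ : ModuleCat.{u} R) (d₂ : X₃ ⟶ S.X₁), d₂ ≫ S.f = 0 :=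
      fun S => ⟨syzygies S.f, Projective.d S.f, (Category.assoc _ _ _).trans ((congrArg _ (kernel.condition _)).trans comp_zero)⟩
    let G := (ChainComplex.mkAux X₀ X₁ X₂ d₀ d₁ s sc n).f
    have e1 := ChainComplex.of_d (fun k => (ChainComplex.mkAux X₀ X₁ X₂ d₀ d₁ s sc k).X₃)
      (fun k => (ChainComplex.mkAux X₀ X₁ X₂ d₀ d₁ s sc k).g) (n + 1 + 1)
    have e2 := ChainComplex.of_d (fun k => (ChainComplex.mkAux X₀ X₁ X₂ d₀ d₁ s sc k).X₃)
      (fun k => (ChainComplex.mkAux X₀ X₁ X₂ d₀ d₁ s sc k).g) (n + 1)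
    refine ShortComplex.exact_of_iso (S₁ := ShortComplex.mk (Projective.d G) G
      ((Category.assoc _ _ _).trans ((congrArg _ (kernel.condition _)).trans comp_zero)))
      (ShortComplex.isoMk (Iso.refl _) (Iso.refl _) (Iso.refl _) ?_ ?_) (exact_d_f G)
    · exact ((Category.comp_id _).trans (e1.symm.trans (Category.id_comp _).symm)).symm
    · exact ((Category.comp_id _).trans (e2.symm.trans (Category.id_comp _).symm)).symm

open CategoryTheory.ProjectiveResolution in
/-- Build a projective resolution of `M` from an exact sequence
`X₂ → X₁ → X₀ → M → 0` of projectives, continued by syzygies. -/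
noncomputable def resOf [Projective X₀] [Projective X₁] [Projective X₂]
    (hex1 : (ShortComplex.mk d₁ d₀ s).Exact)
    (M : ModuleCat.{u} R) (π : X₀ ⟶ M) (w : d₀ ≫ π = 0)
    (hex0 : (ShortComplex.mk d₀ π w).Exact) (hepi : Epi π) :
    ProjectiveResolution M where
  complex := resComplex X₀ X₁ X₂ d₀ d₁ s
  projective := resComplex_projective X₀ X₁ X₂ d₀ d₁ s
  π := (ChainComplex.toSingle₀Equiv _ _).symm ⟨π, by
        rw [show (resComplex X₀ X₁ X₂ d₀ d₁ s).d 1 0 = d₀ from ChainComplex.mk_d_1_0 ..]; exact w⟩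
  quasiIso := ⟨fun n => by
    cases n with
    | zero =>
      rw [ChainComplex.quasiIsoAt₀_iff, ShortComplex.quasiIso_iff_of_zeros']
      · refine (ShortComplex.exact_and_epi_g_iff_of_iso ?_).2 ⟨hex0, hepi⟩
        exact ShortComplex.isoMk (Iso.refl _) (Iso.refl _) (Iso.refl _)
          (by simp [resComplex]; rfl) (by simp [ChainComplex.toSingle₀Equiv, HomologicalComplex.mkHomToSingle_f]; rfl)
      all_goals rfl
    | succ n =>
      rw [quasiIsoAt_iff_exactAt']
      · exact resComplex_exactAt_succ X₀ X₁ X₂ d₀ d₁ s hex1 n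
      · apply ChainComplex.exactAt_succ_single_obj⟩

@[simp] lemma resOf_complex_d10 [Projective X₀] [Projective X₁] [Projective X₂]
    (hex1 : (ShortComplex.mk d₁ d₀ s).Exact)
    (M : ModuleCat.{u} R) (π : X₀ ⟶ M) (w : d₀ ≫ π = 0)
    (hex0 : (ShortComplex.mk d₀ π w).Exact) (hepi : Epi π) :
    (resOf X₀ X₁ X₂ d₀ d₁ s hex1 M π w hex0 hepi).complex.d 1 0 = d₀ :=
  ChainComplex.mk_d_1_0 ..

@[simp] lemma resOf_complex_d21 [Projective X₀] [Projective X₁] [Projective X₂]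
    (hex1 : (ShortComplex.mk d₁ d₀ s).Exact)
    (M : ModuleCat.{u} R) (π : X₀ ⟶ M) (w : d₀ ≫ π = 0)
    (hex0 : (ShortComplex.mk d₀ π w).Exact) (hepi : Epi π) :
    (resOf X₀ X₁ X₂ d₀ d₁ s hex1 M π w hex0 hepi).complex.d 2 1 = d₁ :=
  ChainComplex.mk_d_2_1 ..

lemma exactAt_of_subsingleton_ext {N : ModuleCat.{u} R} (P : ProjectiveResolution N)
    (Y : ModuleCat.{u} R) (k : ℕ)
    (hs : Subsingleton (((Ext R (ModuleCat.{u} R) k).obj (op N)).obj Y)) :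
    (P.complex.linearYonedaObj R Y).ExactAt k := by
  rw [HomologicalComplex.exactAt_iff_isZero_homology]
  have e := (P.isoExt (R := R) k Y).toLinearEquiv
  haveI := hs
  haveI : Subsingleton ((P.complex.linearYonedaObj R Y).homology k) :=
    Equiv.subsingleton e.symm.toEquiv
  exact ModuleCat.isZero_of_subsingleton _

variable {n : ℕ}

instance : Projective (ModuleCat.of R R) :=
  ModuleCat.projective_of_free (Module.Basis.singleton PUnit.{u+1} R)

instance : Projective (ModuleCat.of R (Fin n → R)) :=
  ModuleCat.projective_of_free (Pi.basisFun R (Fin n))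

instance : Projective (ModuleCat.of R (Fin n × Fin n → R)) :=
  ModuleCat.projective_of_free (Pi.basisFun R (Fin n × Fin n))

/-- The linear form with coefficients `x`. -/
noncomputable def lc (x : Fin n → R) : (Fin n → R) →ₗ[R] R := ∑ i, x i • LinearMap.proj i

lemma lc_apply (x y : Fin n → R) : lc x y = ∑ i, x i * y i := by
  simp [lc]

lemma lc_single (x : Fin n → R) (i : Fin n) : lc x (Pi.single i 1) = x i := by
  simp [lc_apply, Pi.single_apply]

lemma lc_mem_span (a x : Fin n → R) : lc a x ∈ Submodule.span R (Set.range a) := by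
  rw [lc_apply]
  exact Submodule.sum_mem _ fun i _ => Ideal.mul_mem_right _ _
    (Submodule.subset_span ⟨i, rfl⟩)

lemma range_lc (a : Fin n → R) :
    LinearMap.range (lc a) = Submodule.span R (Set.range a) := by
  apply le_antisymm
  · rintro _ ⟨x, rfl⟩
    exact lc_mem_span a x
  · rw [Submodule.span_le]
    rintro _ ⟨i, rfl⟩
    exact ⟨Pi.single i 1, lc_single a i⟩

/-- `x ↦ (aⱼxᵢ - aᵢxⱼ)ᵢⱼ`. -/
noncomputable def phiL (a : Fin n → R) : (Fin n → R) →ₗ[R] (Fin n × Fin n → R) :=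
  LinearMap.pi (fun p => a p.2 • LinearMap.proj p.1 - a p.1 • LinearMap.proj p.2)

lemma phiL_apply (a x : Fin n → R) (p : Fin n × Fin n) :
    phiL a x p = a p.2 * x p.1 - a p.1 * x p.2 := by
  simp [phiL]

lemma range_fg {M N : Type u} [AddCommGroup M] [AddCommGroup N] [Module R M] [Module R N]
    [Module.Finite R M] (f : M →ₗ[R] N) : (LinearMap.range f).FG := by
  rw [← Submodule.map_top]
  exact Submodule.FG.map _ (Module.finite_def.mp inferInstance)

section P1

variable (J : Ideal R) (a : Fin n → R) (ha : Submodule.span R (Set.range a) = J)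

/-- The beginning `Rⁿ → R → R/J → 0` of a projective resolution of `R/J`. -/
noncomputable def P1 : ProjectiveResolution (ModuleCat.of R (R ⧸ J)) :=
  resOf (ModuleCat.of R R) (ModuleCat.of R (Fin n → R)) (syzygies (ModuleCat.ofHom (lc a)))
    (ModuleCat.ofHom (lc a)) (Projective.d (ModuleCat.ofHom (lc a))) (by erw [Category.assoc, kernel.condition, comp_zero])
    (exact_d_f _) (ModuleCat.of R (R ⧸ J)) (ModuleCat.ofHom J.mkQ)
    (ModuleCat.hom_ext (LinearMap.ext fun x =>
      (Submodule.Quotient.mk_eq_zero _).2 (ha ▸ lc_mem_span a x)))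
    (by
      rw [ShortComplex.moduleCat_exact_iff_range_eq_ker]
      show LinearMap.range (lc a) = LinearMap.ker J.mkQ
      rw [range_lc, Submodule.ker_mkQ, ha])
    ((ModuleCat.epi_iff_surjective _).2 (Submodule.mkQ_surjective _))

include ha in
lemma hann (h0 : Subsingleton (extMod R (R ⧸ J) R 0)) :
    ∀ r : R, (∀ i, a i * r = 0) → r = 0 := by
  intro r hr
  have hex := exactAt_of_subsingleton_ext (P1 J a ha) (ModuleCat.of R R) 0 h0
  rw [HomologicalComplex.exactAt_iff' _ 0 0 1 (by simp) (by simp),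
    ShortComplex.moduleCat_exact_iff_range_eq_ker] at hex
  set K := (P1 J a ha).complex.linearYonedaObj R (ModuleCat.of R R) with hK
  have hmem : (ModuleCat.ofHom (LinearMap.toSpanSingleton R R r)) ∈
      LinearMap.ker (K.d 0 1).hom := by
    show (P1 J a ha).complex.d 1 0 ≫ ModuleCat.ofHom (LinearMap.toSpanSingleton R R r) = 0
    rw [show (P1 J a ha).complex.d 1 0 = ModuleCat.ofHom (lc a) from resOf_complex_d10 ..]
    refine ModuleCat.hom_ext (LinearMap.ext fun (x : Fin n → R) => ?_)
    show LinearMap.toSpanSingleton R R r (lc a x) = 0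
    rw [LinearMap.toSpanSingleton_apply, lc_apply, smul_eq_mul, Finset.sum_mul]
    refine Finset.sum_eq_zero fun i _ => ?_
    rw [mul_right_comm, hr i, zero_mul]
  have hex' : LinearMap.range (K.d 0 0).hom = LinearMap.ker (K.d 0 1).hom := hex
  rw [← hex'] at hmem
  obtain ⟨g, hg⟩ := hmem
  have h00 : K.d 0 0 = 0 := HomologicalComplex.shape _ _ _ (by simp)
  rw [h00] at hg
  have hz : LinearMap.toSpanSingleton R R r = (0 : R →ₗ[R] R) := congrArg ModuleCat.Hom.hom hg.symm
  simpa using DFunLike.congr_fun hz 1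

include ha in
lemma hmul (h0 : Subsingleton (extMod R (R ⧸ J) R 0))
    (h1 : Subsingleton (extMod R (R ⧸ J) R 1)) :
    ∀ x : Fin n → R, (∀ i j : Fin n, a j * x i = a i * x j) → ∃ r, ∀ i, x i = a i * r := by
  intro x hx
  have hex := exactAt_of_subsingleton_ext (P1 J a ha) (ModuleCat.of R R) 1 h1
  rw [HomologicalComplex.exactAt_iff' _ 0 1 2 (by simp) (by simp),
    ShortComplex.moduleCat_exact_iff_range_eq_ker] at hex
  set K := (P1 J a ha).complex.linearYonedaObj R (ModuleCat.of R R) with hK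
  have hmem : (ModuleCat.ofHom (lc x)) ∈ LinearMap.ker (K.d 1 2).hom := by
    show (P1 J a ha).complex.d 2 1 ≫ ModuleCat.ofHom (lc x) = 0
    refine ModuleCat.hom_ext (LinearMap.ext fun z => ?_)
    set y : Fin n → R := (P1 J a ha).complex.d 2 1 z with hy
    have hay : lc a y = 0 := by
      have hdd := (P1 J a ha).complex.d_comp_d 2 1 0
      rw [show (P1 J a ha).complex.d 1 0 = ModuleCat.ofHom (lc a) from resOf_complex_d10 ..]
        at hdd
      exact congrFun (congrArg (fun f => f.hom.toFun) hdd) z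
    show lc x y = 0
    refine hann J a ha h0 _ fun j => ?_
    rw [lc_apply, Finset.mul_sum]
    calc ∑ i, a j * (x i * y i) = ∑ i, x j * (a i * y i) := by
          refine Finset.sum_congr rfl fun i _ => ?_
          rw [← mul_assoc, hx i j, mul_comm (a i) (x j), mul_assoc]
      _ = x j * lc a y := by rw [lc_apply, Finset.mul_sum]
      _ = 0 := by rw [hay, mul_zero]
  have hex' : LinearMap.range (K.d 0 1).hom = LinearMap.ker (K.d 1 2).hom := hex
  rw [← hex'] at hmem
  obtain ⟨γ, hγ⟩ := hmem
  let γ' : R →ₗ[R] R := γ.hom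
  have hγ' : γ'.comp (lc a) = lc x := congrArg ModuleCat.Hom.hom hγ
  refine ⟨γ' 1, fun i => ?_⟩
  have h1 := DFunLike.congr_fun hγ' (Pi.single i 1)
  rw [LinearMap.comp_apply, lc_single, lc_single] at h1
  rw [← h1]
  calc γ' (a i) = γ' (a i • (1 : R)) := by rw [smul_eq_mul, mul_one]
    _ = a i * γ' 1 := by rw [map_smul, smul_eq_mul]

end P1

section Cases

/-- `r ↦ r • a`. -/
noncomputable def vL (a : Fin n → R) : R →ₗ[R] (Fin n → R) :=
  LinearMap.toSpanSingleton R (Fin n → R) a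

variable (J : Ideal R) (a : Fin n → R) (ha : Submodule.span R (Set.range a) = J)

include ha in
lemma one_mem_of_comp (γ : (Fin n → R) →ₗ[R] R) (hγ : γ a = 1) : J = ⊤ := by
  have hsum : a = ∑ i, Pi.single i (a i) := (Finset.univ_sum_single a).symm
  have key : γ a = ∑ i, a i * γ (Pi.single i (1 : R)) := by
    conv_lhs => rw [hsum]
    rw [map_sum]
    refine Finset.sum_congr rfl fun i _ => ?_
    have hps : (Pi.single i (a i) : Fin n → R) = a i • (Pi.single i (1 : R) : Fin n → R) := by
      funext j
      by_cases h : j = i <;> simp [Pi.single_apply, h]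
    rw [hps, map_smul, smul_eq_mul]
  rw [Ideal.eq_top_iff_one, ← ha, ← hγ, key]
  exact Submodule.sum_mem _ fun i _ => Ideal.mul_mem_right _ _
    (Submodule.subset_span ⟨i, rfl⟩)

include ha in
lemma vL_injective (h0 : Subsingleton (extMod R (R ⧸ J) R 0)) :
    Function.Injective (vL a) := by
  rw [← LinearMap.ker_eq_bot]
  refine LinearMap.ker_eq_bot'.mpr fun r hr => hann J a ha h0 r fun i => ?_
  rw [mul_comm]
  exact congrFun hr i

include ha in
lemma case0 (h0 : Subsingleton (extMod R (R ⧸ J) R 0))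
    (hs : Subsingleton (extMod R ((Fin n → R) ⧸ LinearMap.range (vL a)) R 1)) :
    J = ⊤ := by
  have hvinj := vL_injective J a ha h0
  let P0 : ProjectiveResolution
      (ModuleCat.of R ((Fin n → R) ⧸ LinearMap.range (vL a))) :=
    resOf (ModuleCat.of R (Fin n → R)) (ModuleCat.of R R)
      (syzygies (ModuleCat.ofHom (vL a)))
      (ModuleCat.ofHom (vL a)) (Projective.d (ModuleCat.ofHom (vL a))) (by erw [Category.assoc, kernel.condition, comp_zero])
      (exact_d_f _) _ (ModuleCat.ofHom (LinearMap.range (vL a)).mkQ)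
      (ModuleCat.hom_ext (LinearMap.ext fun r => (Submodule.Quotient.mk_eq_zero _).2 ⟨r, rfl⟩))
      (by
        rw [ShortComplex.moduleCat_exact_iff_range_eq_ker]
        show LinearMap.range (vL a) = LinearMap.ker (LinearMap.range (vL a)).mkQ
        rw [Submodule.ker_mkQ])
      ((ModuleCat.epi_iff_surjective _).2 (Submodule.mkQ_surjective _))
  have hex := exactAt_of_subsingleton_ext P0 (ModuleCat.of R R) 1 hs
  rw [HomologicalComplex.exactAt_iff' _ 0 1 2 (by simp) (by simp),
    ShortComplex.moduleCat_exact_iff_range_eq_ker] at hex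
  set K := P0.complex.linearYonedaObj R (ModuleCat.of R R) with hK
  have hd21 : P0.complex.d 2 1 = 0 := by
    have hdd := P0.complex.d_comp_d 2 1 0
    rw [show P0.complex.d 1 0 = ModuleCat.ofHom (vL a) from resOf_complex_d10 ..] at hdd
    haveI : Mono (ModuleCat.ofHom (vL a)) := (ModuleCat.mono_iff_injective _).2 hvinj
    exact (cancel_mono (ModuleCat.ofHom (vL a))).1 (hdd.trans (Limits.zero_comp (f := ModuleCat.ofHom (vL a))).symm)
  have hmem : (𝟙 (ModuleCat.of R R)) ∈ LinearMap.ker (K.d 1 2).hom := by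
    show P0.complex.d 2 1 ≫ 𝟙 (ModuleCat.of R R) = 0
    rw [hd21]; exact Limits.zero_comp
  have hex' : LinearMap.range (K.d 0 1).hom = LinearMap.ker (K.d 1 2).hom := hex
  rw [← hex'] at hmem
  obtain ⟨γ, hγ⟩ := hmem
  let γ' : (Fin n → R) →ₗ[R] R := γ.hom
  have hγ' : γ'.comp (vL a) = LinearMap.id := congrArg ModuleCat.Hom.hom hγ
  refine one_mem_of_comp J a ha γ' ?_
  have h1 := DFunLike.congr_fun hγ' 1
  rw [LinearMap.comp_apply] at h1
  have hva : vL a 1 = a := one_smul R a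
  rw [hva] at h1
  exact h1

include ha in
lemma case1 (h0 : Subsingleton (extMod R (R ⧸ J) R 0))
    (h1 : Subsingleton (extMod R (R ⧸ J) R 1))
    (hs : Subsingleton (extMod R ((Fin n × Fin n → R) ⧸ LinearMap.range (phiL a)) R 2)) :
    J = ⊤ := by
  have hvinj := vL_injective J a ha h0
  have hs' : (ModuleCat.ofHom (vL a)) ≫ (ModuleCat.ofHom (phiL a)) = 0 := by
    refine ModuleCat.hom_ext (LinearMap.ext fun r => funext fun p => ?_)
    let r' : R := r
    show phiL a (vL a r') p = 0
    rw [phiL_apply]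
    show a p.2 * (r' * a p.1) - a p.1 * (r' * a p.2) = 0
    ring
  have hex1 : (ShortComplex.mk (ModuleCat.ofHom (vL a)) (ModuleCat.ofHom (phiL a)) hs').Exact := by
    rw [ShortComplex.moduleCat_exact_iff_range_eq_ker]
    show LinearMap.range (vL a) = LinearMap.ker (phiL a)
    apply le_antisymm
    · rintro _ ⟨r, rfl⟩
      rw [LinearMap.mem_ker]
      exact congrFun (congrArg (fun f => f.hom.toFun) hs') r
    · intro x hx
      rw [LinearMap.mem_ker] at hx
      have hx' : ∀ i j : Fin n, a j * x i = a i * x j := fun i j => by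
        have := congrFun hx (i, j)
        rw [phiL_apply] at this
        exact sub_eq_zero.mp this
      obtain ⟨r, hr⟩ := hmul J a ha h0 h1 x hx'
      refine ⟨r, funext fun i => ?_⟩
      show r * a i = x i
      rw [hr i, mul_comm]
  let P2 : ProjectiveResolution
      (ModuleCat.of R ((Fin n × Fin n → R) ⧸ LinearMap.range (phiL a))) :=
    resOf (ModuleCat.of R (Fin n × Fin n → R)) (ModuleCat.of R (Fin n → R))
      (ModuleCat.of R R) (ModuleCat.ofHom (phiL a)) (ModuleCat.ofHom (vL a)) hs' hex1
      _ (ModuleCat.ofHom (LinearMap.range (phiL a)).mkQ)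
      (ModuleCat.hom_ext (LinearMap.ext fun x => (Submodule.Quotient.mk_eq_zero _).2 ⟨x, rfl⟩))
      (by
        rw [ShortComplex.moduleCat_exact_iff_range_eq_ker]
        show LinearMap.range (phiL a) = LinearMap.ker (LinearMap.range (phiL a)).mkQ
        rw [Submodule.ker_mkQ])
      ((ModuleCat.epi_iff_surjective _).2 (Submodule.mkQ_surjective _))
  have hex := exactAt_of_subsingleton_ext P2 (ModuleCat.of R R) 2 hs
  rw [HomologicalComplex.exactAt_iff' _ 1 2 3 (by simp) (by simp),
    ShortComplex.moduleCat_exact_iff_range_eq_ker] at hex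
  set K := P2.complex.linearYonedaObj R (ModuleCat.of R R) with hK
  have hd32 : P2.complex.d 3 2 = 0 := by
    have hdd := P2.complex.d_comp_d 3 2 1
    rw [show P2.complex.d 2 1 = ModuleCat.ofHom (vL a) from resOf_complex_d21 ..] at hdd
    haveI : Mono (ModuleCat.ofHom (vL a)) := (ModuleCat.mono_iff_injective _).2 hvinj
    exact (cancel_mono (ModuleCat.ofHom (vL a))).1 (hdd.trans (Limits.zero_comp (f := ModuleCat.ofHom (vL a))).symm)
  have hmem : (𝟙 (ModuleCat.of R R)) ∈ LinearMap.ker (K.d 2 3).hom := by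
    show P2.complex.d 3 2 ≫ 𝟙 (ModuleCat.of R R) = 0
    rw [hd32]; exact Limits.zero_comp
  have hex' : LinearMap.range (K.d 1 2).hom = LinearMap.ker (K.d 2 3).hom := hex
  rw [← hex'] at hmem
  obtain ⟨γ, hγ⟩ := hmem
  let γ' : (Fin n → R) →ₗ[R] R := γ.hom
  have hγ' : γ'.comp (vL a) = LinearMap.id := congrArg ModuleCat.Hom.hom hγ
  refine one_mem_of_comp J a ha γ' ?_
  have h1' := DFunLike.congr_fun hγ' 1
  rw [LinearMap.comp_apply] at h1'
  have hva : vL a 1 = a := one_smul R a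
  rw [hva] at h1'
  exact h1'

end Cases

end DWProof

/-- If the self-FP-injective dimension of `R` is at most `1`, then `R` is a DW-ring. -/


theorem isDWRing_of_fpInjDimLE_one (R : Type u) [CommRing R] (h : FPInjDimLE R 1) :
    IsDWRing R := by
  obtain ⟨m, hm, hExt⟩ := h
  intro J hJ
  obtain ⟨hfg, h0, h1⟩ := hJ
  obtain ⟨n, a, ha⟩ := Submodule.fg_iff_exists_fin_generating_family.mp hfg
  interval_cases m
  · exact DWProof.case0 J a ha h0
      (hExt _ (Module.finitePresentation_of_surjective _
        (Submodule.mkQ_surjective _)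
        (by rw [Submodule.ker_mkQ]; exact DWProof.range_fg _)))
  · exact DWProof.case1 J a ha h0 h1
      (hExt _ (Module.finitePresentation_of_surjective _
        (Submodule.mkQ_surjective _)
        (by rw [Submodule.ker_mkQ]; exact DWProof.range_fg _)))
end

section
/- Let k be a field, D = k[x,y], Q = Frac(D), and let R = D(+)(Q/D) be the idealization (trivial extension) of D by Q/D. Then the ideal m = (x,y)(+)(Q/D) of R is semiregular: its annihilator in R is zero (indeed every element of R annihilated by m is zero). -/
set_option synthInstance.maxHeartbeats 1000000
set_option maxHeartbeats 1000000

universe u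

open TrivSqZeroExt

variable (k : Type u) [Field k]

/-- `D = k[x, y]`, the polynomial ring in two variables over `k`. -/
abbrev PolyD : Type u := MvPolynomial (Fin 2) k

/-- `Q = Frac(D)`, the quotient field of `D = k[x, y]`. -/
abbrev QuotQ : Type u := FractionRing (PolyD k)

/-- The `D`-module `Q/D`. -/
abbrev QmodD : Type u :=
  QuotQ k ⧸ LinearMap.range (Algebra.linearMap (PolyD k) (QuotQ k))

/-- `R = D(+)(Q/D)`, the idealization (trivial extension) of `D = k[x, y]` by `Q/D`. -/
abbrev IdealizationR : Type u := TrivSqZeroExt (PolyD k) (QmodD k)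

/-- The ideal `m = (x, y)(+)(Q/D)` of `R = D(+)(Q/D)`, consisting of all pairs `(f, q̄)`
with `f ∈ (x, y)` and `q̄ ∈ Q/D`. -/
noncomputable def mIdeal : Ideal (IdealizationR k) where
  carrier := {z | fst z ∈ Ideal.span ({MvPolynomial.X 0, MvPolynomial.X 1} :
    Set (PolyD k))}
  zero_mem' := by
    simp only [Set.mem_setOf_eq, fst_zero]
    exact zero_mem _
  add_mem' := by
    intro a b ha hb
    simp only [Set.mem_setOf_eq, fst_add] at *
    exact add_mem ha hb
  smul_mem' := by
    intro c z hz
    simp only [Set.mem_setOf_eq, smul_eq_mul, fst_mul] at *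
    exact Ideal.mul_mem_left _ _ hz

lemma primeX0 : Prime (MvPolynomial.X 0 : PolyD k) := by
  rw [← MulEquiv.prime_iff (MvPolynomial.finSuccEquiv k 1).toMulEquiv]
  have : (MvPolynomial.finSuccEquiv k 1).toMulEquiv (MvPolynomial.X 0) = Polynomial.X :=
    MvPolynomial.finSuccEquiv_X_zero
  rw [this]
  exact Polynomial.prime_X

lemma X0_not_dvd_X1 : ¬ (MvPolynomial.X 0 : PolyD k) ∣ MvPolynomial.X 1 := by
  intro ⟨c, hc⟩
  have := congrArg (MvPolynomial.eval (fun i : Fin 2 => if i = 0 then (0 : k) else 1)) hc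
  simp at this

/-- The ideal `m = (x, y)(+)(Q/D)` of the idealization `R = k[x,y](+)(Q/D)` is semiregular:
every element of `R` annihilated by `m` is zero, i.e. the annihilator of `m` in `R` is zero. -/
theorem mIdeal_semiregular (z : IdealizationR k) (hz : ∀ w ∈ mIdeal k, w * z = 0) :
    z = 0 := by
  classical
  set X0 : PolyD k := MvPolynomial.X 0 with hX0def
  set X1 : PolyD k := MvPolynomial.X 1 with hX1def
  have hmem0 : (inl X0 : IdealizationR k) ∈ mIdeal k := by
    show fst (inl X0 : IdealizationR k) ∈ Ideal.span ({MvPolynomial.X 0, MvPolynomial.X 1} :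
      Set (PolyD k))
    rw [fst_inl]
    exact Ideal.subset_span (Or.inl rfl)
  have hmem1 : (inl X1 : IdealizationR k) ∈ mIdeal k := by
    show fst (inl X1 : IdealizationR k) ∈ Ideal.span ({MvPolynomial.X 0, MvPolynomial.X 1} :
      Set (PolyD k))
    rw [fst_inl]
    exact Ideal.subset_span (Or.inr rfl)
  have h0 := hz _ hmem0
  have h1 := hz _ hmem1
  -- first component
  have hfst : fst z = 0 := by
    have := congrArg fst h0
    rw [fst_mul, fst_inl, fst_zero] at this
    have hX0ne : X0 ≠ 0 := (primeX0 k).ne_zero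
    exact (mul_eq_zero.mp this).resolve_left hX0ne
  -- second components
  have hsnd0 : X0 • snd z = 0 := by
    have := congrArg snd h0
    rw [snd_mul, snd_zero, fst_inl, snd_inl] at this
    simpa using this
  have hsnd1 : X1 • snd z = 0 := by
    have := congrArg snd h1
    rw [snd_mul, snd_zero, fst_inl, snd_inl] at this
    simpa using this
  -- lift snd z to Q
  obtain ⟨q, hq⟩ := Submodule.Quotient.mk_surjective _ (snd z)
  have hsnd : snd z = 0 := by
    rw [← hq] at hsnd0 hsnd1
    rw [← Submodule.Quotient.mk_smul, Submodule.Quotient.mk_eq_zero] at hsnd0 hsnd1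
    obtain ⟨p, hp⟩ := hsnd0
    obtain ⟨r, hr⟩ := hsnd1
    simp only [Algebra.linearMap_apply] at hp hr
    have halg : ∀ d : PolyD k, d • q = algebraMap (PolyD k) (QuotQ k) d * q := fun d =>
      Algebra.smul_def d q
    rw [halg] at hp hr
    have hinj : Function.Injective (algebraMap (PolyD k) (QuotQ k)) :=
      IsFractionRing.injective _ _
    have hkey : X1 * p = X0 * r := by
      apply hinj
      rw [map_mul, map_mul, hp, hr]
      ring
    have hdvd : X0 ∣ p := by
      have : X0 ∣ X1 * p := ⟨r, hkey⟩
      exact ((primeX0 k).dvd_or_dvd this).resolve_left (X0_not_dvd_X1 k)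
    obtain ⟨s, hs⟩ := hdvd
    have hqs : q = algebraMap (PolyD k) (QuotQ k) s := by
      have hX0ne : algebraMap (PolyD k) (QuotQ k) X0 ≠ 0 :=
        fun h => (primeX0 k).ne_zero (hinj (by rw [h, map_zero]))
      have : algebraMap (PolyD k) (QuotQ k) X0 * q
          = algebraMap (PolyD k) (QuotQ k) X0 * algebraMap (PolyD k) (QuotQ k) s := by
        rw [← hp, hs, map_mul]
      exact mul_left_cancel₀ hX0ne this
    rw [← hq, hqs, Submodule.Quotient.mk_eq_zero]
    exact ⟨s, rfl⟩
  ext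
  · rw [hfst, fst_zero]
  · rw [hsnd, snd_zero]
end

section
/- Let R be a commutative ring and I a finitely generated ideal with pd_R(R/I) ≤ d (finite projective dimension at most d, witnessed by a resolution by finitely generated projectives). If Ext_R^i(R/I, R) = 0 for all i = 0,…,d, then I = R. -/
set_option linter.unusedSectionVars false
set_option linter.unusedVariables false
set_option maxHeartbeats 1000000


universe u

open CategoryTheory Opposite

section Aux
open Limits Function
variable {R : Type u} [CommRing R]

/-- M f.g. projective with no nonzero functionals is trivial. -/
lemma subsingleton_of_hom_subsingleton {M : Type u} [AddCommGroup M] [Module R M]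
    [Module.Finite R M] [Module.Projective R M]
    (h : Subsingleton (M →ₗ[R] R)) : Subsingleton M := by
  obtain ⟨n, g, hg⟩ := Module.Finite.exists_fin' R M
  obtain ⟨s, hs⟩ := Module.projective_lifting_property g LinearMap.id hg
  have hs0 : s = 0 := by
    ext x i
    have : (LinearMap.proj i) ∘ₗ s = 0 := Subsingleton.elim _ _
    simpa using congrFun (congrArg DFunLike.coe this) x
  constructor
  intro a b
  have := congrFun (congrArg DFunLike.coe hs) a
  have hb := congrFun (congrArg DFunLike.coe hs) b
  rw [hs0] at this hb
  simp at this hb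
  rw [← this, ← hb]

/-- Splitting lemma: if every functional on `ker f` extends to `P`, and `ker f` is
f.g. projective, then `M` is projective. -/
lemma projective_of_ker_functionals_extend {M P : Type u} [AddCommGroup M] [Module R M]
    [AddCommGroup P] [Module R P] [Module.Projective R P]
    (f : P →ₗ[R] M) (hf : Surjective f)
    [Module.Finite R (LinearMap.ker f)] [Module.Projective R (LinearMap.ker f)]
    (hext : ∀ φ : (LinearMap.ker f) →ₗ[R] R, ∃ h : P →ₗ[R] R,
      h ∘ₗ (LinearMap.ker f).subtype = φ) : Module.Projective R M := by
  set K := LinearMap.ker f with hK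
  obtain ⟨n, g, hg⟩ := Module.Finite.exists_fin' R K
  obtain ⟨s, hs⟩ := Module.projective_lifting_property g LinearMap.id hg
  choose h hh using fun j : Fin n => hext ((LinearMap.proj j) ∘ₗ s)
  set H : P →ₗ[R] (Fin n → R) := LinearMap.pi h with hH
  have hHι : H ∘ₗ K.subtype = s := by
    ext x j
    exact congrFun (congrArg DFunLike.coe (hh j)) x
  set r : P →ₗ[R] K := g ∘ₗ H with hr
  have hrι : ∀ x : K, r x.1 = x := by
    intro x
    have : r (K.subtype x) = g (s x) := by
      simp only [hr, LinearMap.comp_apply]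
      rw [← LinearMap.comp_apply H, hHι]
    rw [Submodule.subtype_apply] at this
    rw [this, ← LinearMap.comp_apply, hs, LinearMap.id_apply]
  -- section of f
  set p : P →ₗ[R] P := LinearMap.id - K.subtype ∘ₗ r with hp
  have hker : K ≤ LinearMap.ker p := by
    intro x hx
    simp only [hp, LinearMap.mem_ker, LinearMap.sub_apply, LinearMap.id_apply,
      LinearMap.comp_apply]
    have h2 : r x = ⟨x, hx⟩ := hrι ⟨x, hx⟩
    rw [h2]
    simp
  set q : (P ⧸ K) →ₗ[R] P := K.liftQ p hker with hq
  set e : (P ⧸ K) ≃ₗ[R] M := f.quotKerEquivOfSurjective hf with he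
  set sec : M →ₗ[R] P := q ∘ₗ (e.symm : M →ₗ[R] (P ⧸ K)) with hsec
  have hfs : f ∘ₗ sec = LinearMap.id := by
    ext m
    obtain ⟨x, rfl⟩ := hf m
    have hxq : (e.symm (f x) : P ⧸ K) = Submodule.Quotient.mk x := by
      apply e.injective
      simp only [LinearEquiv.apply_symm_apply]
      rfl
    simp only [hsec, LinearMap.comp_apply, LinearMap.id_apply, LinearEquiv.coe_coe, hxq]
    have : q (Submodule.Quotient.mk x) = p x := by
      simp [hq]
    rw [this]
    simp only [hp, LinearMap.sub_apply, LinearMap.id_apply, LinearMap.comp_apply, map_sub]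
    have : f ((K.subtype) (r x)) = 0 := (r x).2
    rw [this, sub_zero]
  exact Module.Projective.of_split sec f hfs

section Build
variable {M P : Type u} [AddCommGroup M] [Module R M] [AddCommGroup P] [Module R P]
  [Module.Projective R P]
  (f : P →ₗ[R] M) (hf : Surjective f)
  (Q : ProjectiveResolution (ModuleCat.of R (LinearMap.ker f)))

/-- The objects of the extended resolution. -/
noncomputable def resObj : ℕ → ModuleCat.{u} R
  | 0 => ModuleCat.of R P
  | (n+1) => Q.complex.X n

/-- The differentials. -/
noncomputable def resD : ∀ n : ℕ, resObj f Q (n+1) ⟶ resObj f Q n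
  | 0 => Q.π.f 0 ≫ ModuleCat.ofHom (LinearMap.ker f).subtype
  | (n+1) => Q.complex.d (n+1) n

noncomputable def resComplex : ChainComplex (ModuleCat.{u} R) ℕ :=
  ChainComplex.of (resObj f Q) (resD f Q) (by
    rintro (_|n)
    · show Q.complex.d 1 0 ≫ (Q.π.f 0 ≫ _) = 0
      erw [← Category.assoc, Q.complex_d_comp_π_f_zero, Limits.zero_comp]
    · show Q.complex.d (n+2) (n+1) ≫ Q.complex.d (n+1) n = 0
      simp)

end Build
section Build2
variable {M P : Type u} [AddCommGroup M] [Module R M] [AddCommGroup P] [Module R P]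
  [Module.Projective R P]
  (f : P →ₗ[R] M) (hf : Surjective f)
  (Q : ProjectiveResolution (ModuleCat.of R (LinearMap.ker f)))

noncomputable def resπ : resComplex f Q ⟶ (ChainComplex.single₀ (ModuleCat.{u} R)).obj (ModuleCat.of R M) :=
  (ChainComplex.toSingle₀Equiv _ _).symm ⟨ModuleCat.ofHom f, by
    show (resComplex f Q).d 1 0 ≫ ModuleCat.ofHom f = 0
    rw [show (resComplex f Q).d 1 0 = resD f Q 0 from ChainComplex.of_d (resObj f Q) (resD f Q) 0]
    show (Q.π.f 0 ≫ ModuleCat.ofHom (LinearMap.ker f).subtype) ≫ ModuleCat.ofHom f = 0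
    erw [Category.assoc]
    convert Limits.comp_zero
    ext x
    exact x.2⟩

instance resProjective (n : ℕ) : Projective ((resComplex f Q).X n) := by
  cases n with
  | zero =>
    show Projective (ModuleCat.of R P)
    rw [← IsProjective.iff_projective]
    infer_instance
  | succ n => exact Q.projective n

end Build2
section Build3
variable {M P : Type u} [AddCommGroup M] [Module R M] [AddCommGroup P] [Module R P]
  [Module.Projective R P]
  (f : P →ₗ[R] M) (hf : Surjective f)
  (Q : ProjectiveResolution (ModuleCat.of R (LinearMap.ker f)))

lemma resπ_f_zero : (resπ f Q).f 0 = ModuleCat.ofHom f :=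
  ChainComplex.toSingle₀Equiv_symm_apply_f_zero _ _

lemma resComplex_exactAt_succ (n : ℕ) : (resComplex f Q).ExactAt (n + 1) := by
  rw [HomologicalComplex.exactAt_iff' _ (n + 2) (n + 1) n (by simp) (by simp)]
  rw [ShortComplex.moduleCat_exact_iff]
  intro x hx
  dsimp [HomologicalComplex.sc', HomologicalComplex.shortComplexFunctor'] at x hx ⊢
  rw [show (resComplex f Q).d (n+2) (n+1) = resD f Q (n+1) from ChainComplex.of_d (resObj f Q) (resD f Q) (n+1)]
  rw [show (resComplex f Q).d (n+1) n = resD f Q n from ChainComplex.of_d (resObj f Q) (resD f Q) n] at hx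
  cases n with
  | zero =>
    have hx0 : Q.π.f 0 x = 0 := by
      have : ((LinearMap.ker f).subtype) ((Q.π.f 0) x) = 0 := hx
      exact Subtype.ext this
    obtain ⟨y, hy⟩ := (ShortComplex.moduleCat_exact_iff _).1 Q.exact₀ x hx0
    exact ⟨y, hy⟩
  | succ n =>
    obtain ⟨y, hy⟩ := (ShortComplex.moduleCat_exact_iff _).1 (Q.exact_succ n) x hx
    exact ⟨y, hy⟩

end Build3
section Build4
variable {M P : Type u} [AddCommGroup M] [Module R M] [AddCommGroup P] [Module R P]
  [Module.Projective R P]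
  (f : P →ₗ[R] M) (hf : Surjective f)
  (Q : ProjectiveResolution (ModuleCat.of R (LinearMap.ker f)))

/-- The extended projective resolution of `M`. -/
noncomputable def extRes : ProjectiveResolution (ModuleCat.of R M) where
  complex := resComplex f Q
  π := resπ f Q
  quasiIso := ⟨fun n => by
    cases n with
    | zero =>
      rw [ChainComplex.quasiIsoAt₀_iff, ShortComplex.quasiIso_iff_of_zeros']
      · constructor
        · rw [ShortComplex.moduleCat_exact_iff]
          intro x hx
          dsimp [HomologicalComplex.sc', HomologicalComplex.shortComplexFunctor'] at x hx ⊢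
          rw [show (resComplex f Q).d 1 0 = resD f Q 0 from ChainComplex.of_d (resObj f Q) (resD f Q) 0]
          have hx' : f x = 0 := by
            have := congrArg (fun g => g) hx
            erw [resπ_f_zero] at hx
            exact hx
          have hmem : x ∈ LinearMap.ker f := hx'
          obtain ⟨y, hy⟩ := (ModuleCat.epi_iff_surjective (Q.π.f 0)).1 inferInstance ⟨x, hmem⟩
          refine ⟨y, ?_⟩
          show ((LinearMap.ker f).subtype) ((Q.π.f 0) y) = x
          rw [hy]
          rfl
        · show Epi ((resπ f Q).f 0)
          rw [resπ_f_zero]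
          exact (ModuleCat.epi_iff_surjective _).2 hf
      · rfl
      · rfl
      · rfl
    | succ n =>
      rw [quasiIsoAt_iff_exactAt' (resπ f Q) (n + 1) (ChainComplex.exactAt_succ_single_obj _ _)]
      exact resComplex_exactAt_succ f Q n⟩

end Build4
lemma ModuleCat.subsingleton_iff_isZero (N : ModuleCat.{u} R) : Subsingleton N ↔ IsZero N := by
  constructor
  · intro h; exact ModuleCat.isZero_of_subsingleton N
  · intro h
    rw [IsZero.iff_id_eq_zero] at h
    have hz : ∀ x : N, x = 0 := by
      intro x
      have ha : (𝟙 N : N ⟶ N) x = (0 : N ⟶ N) x := by rw [h]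
      simpa using ha
    exact ⟨fun a b => by rw [hz a, hz b]⟩

lemma ext_subsingleton_iff {Z Y : ModuleCat.{u} R} (S : ProjectiveResolution Z) (n : ℕ) :
    Subsingleton (((Ext R (ModuleCat.{u} R) n).obj (op Z)).obj Y) ↔
      (S.complex.linearYonedaObj R Y).ExactAt n := by
  rw [HomologicalComplex.exactAt_iff_isZero_homology,
    ← ModuleCat.subsingleton_iff_isZero]
  constructor
  · intro h
    exact ((S.isoExt n Y).toLinearEquiv.toEquiv.subsingleton_congr).1 h
  · intro h
    exact ((S.isoExt n Y).toLinearEquiv.toEquiv.subsingleton_congr).2 h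
section Dual
variable {M P : Type u} [AddCommGroup M] [Module R M] [AddCommGroup P] [Module R P]
  [Module.Projective R P]
  (f : P →ₗ[R] M) (hf : Surjective f)
  (Q : ProjectiveResolution (ModuleCat.of R (LinearMap.ker f)))
  (Y : ModuleCat.{u} R)

lemma dual_exactAt_succ_succ_iff (n : ℕ) :
    ((resComplex f Q).linearYonedaObj R Y).ExactAt (n + 2) ↔
      (Q.complex.linearYonedaObj R Y).ExactAt (n + 1) := by
  rw [HomologicalComplex.exactAt_iff' _ (n+1) (n+2) (n+3)
    (by simp [CochainComplex.prev_nat_succ]) (by simp),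
    HomologicalComplex.exactAt_iff' _ n (n+1) (n+2)
    (by simp [CochainComplex.prev_nat_succ]) (by simp)]
  refine ShortComplex.exact_iff_of_iso (ShortComplex.isoMk (Iso.refl _) (Iso.refl _) (Iso.refl _) ?_ ?_)
  · dsimp
    erw [Category.id_comp, Category.comp_id]
    dsimp only [HomologicalComplex.sc', HomologicalComplex.shortComplexFunctor']
    simp only [ChainComplex.linearYonedaObj_d]
    rw [show (resComplex f Q).d (n+2) (n+1) = resD f Q (n+1) from ChainComplex.of_d (resObj f Q) (resD f Q) (n+1)]
    rfl
  · dsimp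
    erw [Category.id_comp, Category.comp_id]
    dsimp only [HomologicalComplex.sc', HomologicalComplex.shortComplexFunctor']
    simp only [ChainComplex.linearYonedaObj_d]
    rw [show (resComplex f Q).d (n+3) (n+2) = resD f Q (n+2) from ChainComplex.of_d (resObj f Q) (resD f Q) (n+2)]
    rfl

end Dual
section Dual2
variable {M P : Type u} [AddCommGroup M] [Module R M] [AddCommGroup P] [Module R P]
  [Module.Projective R P]
  (f : P →ₗ[R] M) (hf : Surjective f)
  (Q : ProjectiveResolution (ModuleCat.of R (LinearMap.ker f)))
  {N : Type u} [AddCommGroup N] [Module R N]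

include hf in
lemma hom_subsingleton_of_exactAt_zero
    (h : ((resComplex f Q).linearYonedaObj R (ModuleCat.of R N)).ExactAt 0) :
    Subsingleton (M →ₗ[R] N) := by
  rw [HomologicalComplex.exactAt_iff' _ 0 0 1 (by simp) (by simp),
    ShortComplex.moduleCat_exact_iff] at h
  have hz : ∀ φ : M →ₗ[R] N, φ = 0 := by
    intro φ
    set g : (ModuleCat.of R P ⟶ ModuleCat.of R N) := ModuleCat.ofHom (φ ∘ₗ f) with hgdef
    have hg : (((resComplex f Q).linearYonedaObj R (ModuleCat.of R N)).d 0 1) g = 0 := by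
      rw [ChainComplex.linearYonedaObj_d]
      show (resComplex f Q).d 1 0 ≫ g = 0
      rw [show (resComplex f Q).d 1 0 = resD f Q 0 from ChainComplex.of_d (resObj f Q) (resD f Q) 0]
      show (Q.π.f 0 ≫ ModuleCat.ofHom (LinearMap.ker f).subtype) ≫ g = 0
      ext x
      show φ (f ((LinearMap.ker f).subtype ((Q.π.f 0) x))) = 0
      rw [show f ((LinearMap.ker f).subtype ((Q.π.f 0) x)) = 0 from ((Q.π.f 0) x).2]
      simp
    obtain ⟨e, he⟩ := h g hg
    have hd : (((resComplex f Q).linearYonedaObj R (ModuleCat.of R N)).d 0 0) = 0 :=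
      HomologicalComplex.shape _ 0 0 (by simp)
    have he2 : (((resComplex f Q).linearYonedaObj R (ModuleCat.of R N)).d 0 0) e = g := he
    rw [hd] at he2
    have hg0 : g = 0 := by rw [← he2]; rfl
    ext m
    obtain ⟨x, rfl⟩ := hf m
    have := congrArg (fun (l : ModuleCat.of R P ⟶ ModuleCat.of R N) => l.hom x) hg0
    simpa [hgdef] using this
  exact ⟨fun a b => by rw [hz a, hz b]⟩

lemma extend_of_exactAt_one
    (h : ((resComplex f Q).linearYonedaObj R (ModuleCat.of R N)).ExactAt 1) :
    ∀ φ : (LinearMap.ker f) →ₗ[R] N, ∃ e : P →ₗ[R] N,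
      e ∘ₗ (LinearMap.ker f).subtype = φ := by
  rw [HomologicalComplex.exactAt_iff' _ 0 1 2 (by simp) (by simp),
    ShortComplex.moduleCat_exact_iff] at h
  intro φ
  set g : (Q.complex.X 0 ⟶ ModuleCat.of R N) := Q.π.f 0 ≫ ModuleCat.ofHom φ with hgdef
  have hg : (((resComplex f Q).linearYonedaObj R (ModuleCat.of R N)).d 1 2) g = 0 := by
    rw [ChainComplex.linearYonedaObj_d]
    show (resComplex f Q).d 2 1 ≫ g = 0
    rw [show (resComplex f Q).d 2 1 = resD f Q 1 from ChainComplex.of_d (resObj f Q) (resD f Q) 1]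
    show Q.complex.d 1 0 ≫ (Q.π.f 0 ≫ ModuleCat.ofHom φ) = 0
    erw [← Category.assoc, Q.complex_d_comp_π_f_zero, Limits.zero_comp]
  obtain ⟨e, he⟩ := h g hg
  refine ⟨e.hom, ?_⟩
  have he' : (resComplex f Q).d 1 0 ≫ e = g := he
  rw [show (resComplex f Q).d 1 0 = resD f Q 0 from ChainComplex.of_d (resObj f Q) (resD f Q) 0] at he'
  have he'' : Q.π.f 0 ≫ (ModuleCat.ofHom (LinearMap.ker f).subtype ≫ e) = Q.π.f 0 ≫ ModuleCat.ofHom φ := by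
    erw [← Category.assoc]
    exact he'
  have := (cancel_epi (Q.π.f 0)).1 he''
  ext x
  exact congrArg (fun (l : ModuleCat.of R (LinearMap.ker f) ⟶ ModuleCat.of R N) => l.hom x) this

end Dual2
end Aux

section Key
open Function
lemma key (R : Type u) [CommRing R] :
    ∀ (k : ℕ) (M : Type u) [AddCommGroup M] [Module R M],
    HasFGProjRes R k M → (∀ i, 1 ≤ i → i ≤ k → Subsingleton (extMod R M R i)) →
    Module.Finite R M ∧ Module.Projective R M := by
  intro k
  induction k with
  | zero =>
    intro M _ _ hres _
    exact hres
  | succ k ih =>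
    rintro M _ _ ⟨P, _, _, f, hPfin, hPproj, hfsurj, hker⟩ hext
    haveI := hPproj
    set Q := ProjectiveResolution.of (ModuleCat.of R (LinearMap.ker f)) with hQ
    have hKext : ∀ i, 1 ≤ i → i ≤ k → Subsingleton (extMod R (LinearMap.ker f) R i) := by
      intro i h1 h2
      obtain ⟨i', rfl⟩ : ∃ i', i = i' + 1 := ⟨i - 1, by omega⟩
      have h3 : Subsingleton (extMod R M R (i' + 1 + 1)) := hext (i' + 2) (by omega) (by omega)
      rw [ext_subsingleton_iff (extRes f hfsurj Q) (i' + 1 + 1)] at h3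
      rw [show (extRes f hfsurj Q).complex = resComplex f Q from rfl] at h3
      rw [dual_exactAt_succ_succ_iff f Q (ModuleCat.of R R) i'] at h3
      rw [ext_subsingleton_iff Q (i' + 1)]
      exact h3
    have hK := ih (LinearMap.ker f) hker hKext
    haveI := hK.1
    haveI := hK.2
    have h1 : Subsingleton (extMod R M R 1) := hext 1 (by omega) (by omega)
    rw [ext_subsingleton_iff (extRes f hfsurj Q) 1] at h1
    rw [show (extRes f hfsurj Q).complex = resComplex f Q from rfl] at h1
    have hextend := extend_of_exactAt_one f Q h1
    exact ⟨Module.Finite.of_surjective f hfsurj,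
      projective_of_ker_functionals_extend f hfsurj hextend⟩

end Key

/-- If `I` is a finitely generated ideal such that `R/I` has projective dimension at most `d`,
witnessed by a resolution by finitely generated projectives, and `Ext_R^i(R/I, R) = 0` for
`i = 0, …, d`, then `I = R`. -/
theorem ideal_eq_top_of_fgProjRes_of_ext_vanishing (R : Type u) [CommRing R] (d : ℕ)
    (I : Ideal R) (hI : I.FG) (hres : ∃ k ≤ d, HasFGProjRes R k (R ⧸ I))
    (hext : ∀ i ≤ d, Subsingleton (extMod R (R ⧸ I) R i)) :
    I = ⊤ := by
  obtain ⟨k, hk, hres⟩ := hres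
  obtain ⟨hfin, hproj⟩ := key R k (R ⧸ I) hres (fun i _ h2 => hext i (le_trans h2 hk))
  haveI := hfin
  haveI := hproj
  set f0 : (R ⧸ I) →ₗ[R] (R ⧸ I) := LinearMap.id with hf0
  have hsurj0 : Function.Surjective f0 := fun x => ⟨x, rfl⟩
  set Q0 := ProjectiveResolution.of (ModuleCat.of R (LinearMap.ker f0)) with hQ0
  have h0 : Subsingleton (extMod R (R ⧸ I) R 0) := hext 0 (by omega)
  rw [ext_subsingleton_iff (extRes f0 hsurj0 Q0) 0] at h0
  rw [show (extRes f0 hsurj0 Q0).complex = resComplex f0 Q0 from rfl] at h0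
  have hsub : Subsingleton ((R ⧸ I) →ₗ[R] R) := hom_subsingleton_of_exactAt_zero f0 hsurj0 Q0 h0
  have : Subsingleton (R ⧸ I) := subsingleton_of_hom_subsingleton hsub
  exact Ideal.Quotient.subsingleton_iff.mp this
end
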